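/- arXiv:2409.14809 — 2 statements merged into one kernel-verified Lean document; each statement's English description precedes it below -/
import Mathlib

section
/- If a linear cocycle 𝒜 admits a tempered exponential dichotomy, then there exists a tempered random variable C : Ω → (0,∞) such that the pair (L^∞_C(Ω,X), L^∞(Ω,X)) is admissible for 𝒜: for each g ∈ L^∞(Ω,X) there exists a unique f ∈ L^∞_C(Ω,X) with f(ω) − A(σ^{-1}ω) f(σ^{-1}ω) = g(ω) for ℙ-a.e. ω. -/
open MeasureTheory Filter

/-- `𝒜` is a linear cocycle over `σ`. -/
def IsCocycle {Ω X : Type*} [NormedAddCommGroup X] [NormedSpace ℝ X]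
    (σ : Ω → Ω) (𝒜 : Ω → ℕ → X →L[ℝ] X) : Prop :=
  (∀ ω, 𝒜 ω 0 = ContinuousLinearMap.id ℝ X) ∧
    ∀ ω (m n : ℕ), 𝒜 ω (n + m) = (𝒜 (σ^[m] ω) n).comp (𝒜 ω m)

/-- A tempered exponential dichotomy for the cocycle `𝒜` over the invertible system
`σ`: measurable equivariant projections `P` (stable) with complement `Id - P`
(unstable), a backwards cocycle `B ω n` (the inverse `𝒜(ω, -n)` of `𝒜(σ^{-n}ω, n)`
restricted to the unstable direction), a tempered random variable `K > 0` and a rate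
`lam > 0` realizing the exponential bounds. -/
structure Dichotomy {Ω X : Type*} [MeasurableSpace Ω]
    [NormedAddCommGroup X] [NormedSpace ℝ X] [MeasurableSpace X] [BorelSpace X]
    (μ : Measure Ω) (σ : Ω ≃ᵐ Ω) (𝒜 : Ω → ℕ → X →L[ℝ] X) where
  P : Ω → X →L[ℝ] X
  B : Ω → ℕ → X →L[ℝ] X
  K : Ω → ℝ
  lam : ℝ
  lam_pos : 0 < lam
  K_pos : ∀ ω, 0 < K ω
  K_meas : Measurable K
  tempered_pos : ∀ᵐ ω ∂μ,
    Tendsto (fun n : ℕ => Real.log (K (σ^[n] ω)) / (n : ℝ)) atTop (nhds 0)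
  tempered_neg : ∀ᵐ ω ∂μ,
    Tendsto (fun n : ℕ => Real.log (K (σ.symm^[n] ω)) / (n : ℝ)) atTop (nhds 0)
  idem : ∀ ω, (P ω).comp (P ω) = P ω
  P_meas : ∀ x : X, Measurable fun ω => P ω x
  equivar : ∀ ω, (P (σ ω)).comp (𝒜 ω 1) = (𝒜 ω 1).comp (P ω)
  inv_right : ∀ ω (n : ℕ),
    (𝒜 (σ.symm^[n] ω) n).comp ((B ω n).comp (ContinuousLinearMap.id ℝ X - P ω)) =
      ContinuousLinearMap.id ℝ X - P ω
  inv_left : ∀ ω (n : ℕ),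
    (B ω n).comp ((𝒜 (σ.symm^[n] ω) n).comp
        (ContinuousLinearMap.id ℝ X - P (σ.symm^[n] ω))) =
      ContinuousLinearMap.id ℝ X - P (σ.symm^[n] ω)
  B_ker : ∀ ω (n : ℕ),
    (P (σ.symm^[n] ω)).comp ((B ω n).comp (ContinuousLinearMap.id ℝ X - P ω)) = 0
  bound_s : ∀ᵐ ω ∂μ, ∀ n : ℕ,
    ‖(𝒜 ω n).comp (P ω)‖ ≤ K ω * Real.exp (-lam * n)
  bound_u : ∀ᵐ ω ∂μ, ∀ n : ℕ,
    ‖(B ω n).comp (ContinuousLinearMap.id ℝ X - P ω)‖ ≤ K ω * Real.exp (-lam * n)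

/-- Membership in the weighted space `L^∞_C(Ω, X)`: measurable with
`esssup C(ω)‖f(ω)‖ < ∞`. -/
def MemLinfW {Ω X : Type*} [MeasurableSpace Ω] [NormedAddCommGroup X]
    [MeasurableSpace X] (μ : MeasureTheory.Measure Ω) (C : Ω → ℝ) (f : Ω → X) : Prop :=
  Measurable f ∧ ∃ M : ℝ, ∀ᵐ ω ∂μ, C ω * ‖f ω‖ ≤ M

/-- The pair `(L^∞_{C₁}, L^∞_{C₂})` is admissible for the cocycle with generator `A`:
for every `g ∈ L^∞_{C₂}` there is an (a.e.-essentially) unique `f ∈ L^∞_{C₁}` with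
`f(ω) − A(σ^{-1}ω) f(σ^{-1}ω) = g(ω)` a.e. -/
def Admissible {Ω X : Type*} [MeasurableSpace Ω] [NormedAddCommGroup X]
    [NormedSpace ℝ X] [MeasurableSpace X] (μ : MeasureTheory.Measure Ω) (σ : Ω ≃ᵐ Ω)
    (A : Ω → X →L[ℝ] X) (C₁ C₂ : Ω → ℝ) : Prop :=
  ∀ g : Ω → X, MemLinfW μ C₂ g →
    ∃ f : Ω → X,
      (MemLinfW μ C₁ f ∧ ∀ᵐ ω ∂μ, f ω - A (σ.symm ω) (f (σ.symm ω)) = g ω) ∧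
      ∀ f' : Ω → X,
        (MemLinfW μ C₁ f' ∧ ∀ᵐ ω ∂μ, f' ω - A (σ.symm ω) (f' (σ.symm ω)) = g ω) →
        f' =ᵐ[μ] f

/-- A positive random variable `K` is tempered:
`(1/n) log K(σ^{±n} ω) → 0` almost surely. -/
def Tempered {Ω : Type*} [MeasurableSpace Ω] (μ : MeasureTheory.Measure Ω)
    (σ : Ω ≃ᵐ Ω) (K : Ω → ℝ) : Prop :=
  ∀ᵐ ω ∂μ,
    Filter.Tendsto (fun n : ℕ => Real.log (K (σ^[n] ω)) / (n : ℝ))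
      Filter.atTop (nhds 0) ∧
    Filter.Tendsto (fun n : ℕ => Real.log (K (σ.symm^[n] ω)) / (n : ℝ))
      Filter.atTop (nhds 0)


set_option linter.unusedSectionVars false
set_option linter.unusedVariables false
set_option maxHeartbeats 1000000
open Function
open scoped ENNReal

namespace Stmt10

section Iter
variable {Ω : Type*} [MeasurableSpace Ω]

lemma symm_iter_iter (σ : Ω ≃ᵐ Ω) (n : ℕ) (ω : Ω) : σ.symm^[n] (σ^[n] ω) = ω :=
  (Function.LeftInverse.iterate σ.symm_apply_apply n) ω

lemma iter_symm_iter (σ : Ω ≃ᵐ Ω) (n : ℕ) (ω : Ω) : σ^[n] (σ.symm^[n] ω) = ω :=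
  (Function.LeftInverse.iterate σ.apply_symm_apply n) ω

lemma symm_iter_of_iter_le (σ : Ω ≃ᵐ Ω) {k n : ℕ} (h : k ≤ n) (ω : Ω) :
    σ.symm^[k] (σ^[n] ω) = σ^[n - k] ω := by
  conv_lhs => rw [show n = k + (n - k) by omega, Function.iterate_add_apply,
    symm_iter_iter]

lemma symm_iter_of_iter_ge (σ : Ω ≃ᵐ Ω) {k n : ℕ} (h : n ≤ k) (ω : Ω) :
    σ.symm^[k] (σ^[n] ω) = σ.symm^[k - n] ω := by
  conv_lhs => rw [show k = (k - n) + n by omega, Function.iterate_add_apply,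
    symm_iter_iter]

lemma iter_of_symm_iter_le (σ : Ω ≃ᵐ Ω) {k n : ℕ} (h : k ≤ n) (ω : Ω) :
    σ^[k] (σ.symm^[n] ω) = σ.symm^[n - k] ω := by
  conv_lhs => rw [show n = k + (n - k) by omega, Function.iterate_add_apply,
    iter_symm_iter]

lemma iter_of_symm_iter_ge (σ : Ω ≃ᵐ Ω) {k n : ℕ} (h : n ≤ k) (ω : Ω) :
    σ^[k] (σ.symm^[n] ω) = σ^[k - n] ω := by
  conv_lhs => rw [show k = (k - n) + n by omega, Function.iterate_add_apply,
    iter_symm_iter]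

end Iter

section CLM
variable {Ω X : Type*} [MeasurableSpace Ω]
  [NormedAddCommGroup X] [NormedSpace ℝ X] [MeasurableSpace X] [BorelSpace X]
  [TopologicalSpace.SeparableSpace X]


lemma measurable_clm_apply {T : Ω → X →L[ℝ] X} (hT : ∀ x, Measurable fun ω => T ω x)
    {h : Ω → X} (hh : Measurable h) : Measurable fun ω => T ω (h ω) := by
  classical
  haveI : SecondCountableTopology X := UniformSpace.secondCountable_of_separable X
  have hsm : StronglyMeasurable h := hh.stronglyMeasurable
  have key : ∀ s : SimpleFunc Ω X, Measurable fun ω => T ω (s ω) := by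
    intro s
    refine SimpleFunc.induction ?_ ?_ s
    · intro c A hA
      have : (fun ω => T ω ((SimpleFunc.piecewise A hA (SimpleFunc.const Ω c)
          (SimpleFunc.const Ω 0)) ω)) = A.piecewise (fun ω => T ω c) (fun _ => (0:X)) := by
        funext ω; by_cases hω : ω ∈ A <;>
          simp [SimpleFunc.piecewise_apply, Set.piecewise, hω]
      rw [this]
      exact Measurable.piecewise hA (hT c) measurable_const
    · intro s₁ s₂ _ h1 h2
      have : (fun ω => T ω ((s₁ + s₂) ω)) = fun ω => T ω (s₁ ω) + T ω (s₂ ω) := by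
        funext ω; simp
      rw [this]; exact h1.add h2
  refine measurable_of_tendsto_metrizable (fun k => key (hsm.approx k)) ?_
  rw [tendsto_pi_nhds]
  exact fun ω => ((T ω).continuous.tendsto _).comp (hsm.tendsto_approx ω)


end CLM

section Alg
variable {Ω X : Type*} [MeasurableSpace Ω]
  [NormedAddCommGroup X] [NormedSpace ℝ X] [MeasurableSpace X] [BorelSpace X]
variable {μ : MeasureTheory.Measure Ω} {σ : Ω ≃ᵐ Ω} {𝒜 : Ω → ℕ → X →L[ℝ] X}


/-- complementary (unstable) projection -/
noncomputable def Qp (D : Dichotomy μ σ 𝒜) (ω : Ω) : X →L[ℝ] X :=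
  ContinuousLinearMap.id ℝ X - D.P ω

lemma Qp_apply (D : Dichotomy μ σ 𝒜) (ω : Ω) (x : X) : Qp D ω x = x - D.P ω x := rfl

lemma P_add_Qp (D : Dichotomy μ σ 𝒜) (ω : Ω) (x : X) : D.P ω x + Qp D ω x = x := by
  simp [Qp_apply]

lemma step1 (hcoc : IsCocycle (⇑σ) 𝒜) (ω : Ω) (n : ℕ) (x : X) :
    𝒜 ω (n + 1) x = 𝒜 (σ^[n] ω) 1 (𝒜 ω n x) := by
  have := hcoc.2 ω n 1
  rw [Nat.add_comm 1 n] at this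
  rw [this]; rfl

lemma step1' (hcoc : IsCocycle (⇑σ) 𝒜) (ω : Ω) (n : ℕ) (x : X) :
    𝒜 ω (n + 1) x = 𝒜 (σ ω) n (𝒜 ω 1 x) := by
  have := hcoc.2 ω 1 n
  rw [this]; rfl

lemma zero_apply' (hcoc : IsCocycle (⇑σ) 𝒜) (ω : Ω) (x : X) : 𝒜 ω 0 x = x := by
  rw [hcoc.1]; rfl

lemma equivar_apply (D : Dichotomy μ σ 𝒜) (ω : Ω) (x : X) :
    D.P (σ ω) (𝒜 ω 1 x) = 𝒜 ω 1 (D.P ω x) := by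
  have := ContinuousLinearMap.ext_iff.mp (D.equivar ω) x
  simpa using this

lemma equivar_n (hcoc : IsCocycle (⇑σ) 𝒜) (D : Dichotomy μ σ 𝒜) (ω : Ω) (n : ℕ) (x : X) :
    D.P (σ^[n] ω) (𝒜 ω n x) = 𝒜 ω n (D.P ω x) := by
  induction n with
  | zero => simp [zero_apply' hcoc]
  | succ n ih =>
    calc D.P (σ^[n+1] ω) (𝒜 ω (n+1) x)
        = D.P (σ (σ^[n] ω)) (𝒜 (σ^[n] ω) 1 (𝒜 ω n x)) := by
          rw [step1 hcoc ω n x, iterate_succ_apply']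
      _ = 𝒜 (σ^[n] ω) 1 (D.P (σ^[n] ω) (𝒜 ω n x)) := equivar_apply D _ _
      _ = 𝒜 (σ^[n] ω) 1 (𝒜 ω n (D.P ω x)) := by rw [ih]
      _ = 𝒜 ω (n+1) (D.P ω x) := (step1 hcoc ω n _).symm

lemma equivar_n_Q (hcoc : IsCocycle (⇑σ) 𝒜) (D : Dichotomy μ σ 𝒜) (ω : Ω) (n : ℕ) (x : X) :
    Qp D (σ^[n] ω) (𝒜 ω n x) = 𝒜 ω n (Qp D ω x) := by
  simp [Qp_apply, equivar_n hcoc D, map_sub]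

lemma invr_apply (D : Dichotomy μ σ 𝒜) (ω : Ω) (n : ℕ) (x : X) :
    𝒜 (σ.symm^[n] ω) n (D.B ω n (Qp D ω x)) = Qp D ω x := by
  have := ContinuousLinearMap.ext_iff.mp (D.inv_right ω n) x
  simpa [Qp] using this

lemma invl_apply (D : Dichotomy μ σ 𝒜) (ω : Ω) (n : ℕ) (y : X) :
    D.B ω n (𝒜 (σ.symm^[n] ω) n (Qp D (σ.symm^[n] ω) y)) = Qp D (σ.symm^[n] ω) y := by
  have := ContinuousLinearMap.ext_iff.mp (D.inv_left ω n) y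
  simpa [Qp] using this

lemma bker_apply (D : Dichotomy μ σ 𝒜) (ω : Ω) (n : ℕ) (x : X) :
    D.P (σ.symm^[n] ω) (D.B ω n (Qp D ω x)) = 0 := by
  have := ContinuousLinearMap.ext_iff.mp (D.B_ker ω n) x
  simpa [Qp] using this

lemma B_unique (hcoc : IsCocycle (⇑σ) 𝒜) (D : Dichotomy μ σ 𝒜) (ω : Ω) (n : ℕ) (x y : X)
    (h1 : D.P (σ.symm^[n] ω) y = 0) (h2 : 𝒜 (σ.symm^[n] ω) n y = Qp D ω x) :
    y = D.B ω n (Qp D ω x) := by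
  have hy : Qp D (σ.symm^[n] ω) y = y := by
    rw [Qp_apply, h1, sub_zero]
  calc y = Qp D (σ.symm^[n] ω) y := hy.symm
    _ = D.B ω n (𝒜 (σ.symm^[n] ω) n (Qp D (σ.symm^[n] ω) y)) := (invl_apply D ω n y).symm
    _ = D.B ω n (Qp D ω x) := by rw [hy, h2]

lemma B_zero (hcoc : IsCocycle (⇑σ) 𝒜) (D : Dichotomy μ σ 𝒜) (ω : Ω) (x : X) :
    D.B ω 0 (Qp D ω x) = Qp D ω x := by
  have := invr_apply D ω 0 x
  rwa [Function.iterate_zero_apply, zero_apply' hcoc] at this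

lemma B_step (hcoc : IsCocycle (⇑σ) 𝒜) (D : Dichotomy μ σ 𝒜) (ω : Ω) (n : ℕ) (x : X) :
    𝒜 (σ.symm^[n+1] ω) 1 (D.B ω (n+1) (Qp D ω x)) = D.B ω n (Qp D ω x) := by
  set b := D.B ω (n+1) (Qp D ω x) with hb
  have hσ1 : σ (σ.symm^[n+1] ω) = σ.symm^[n] ω := by
    rw [iterate_succ_apply', σ.apply_symm_apply]
  refine (B_unique hcoc D ω n x _ ?_ ?_).symm.symm
  · -- P (σ.symm^[n] ω) (𝒜 (σ.symm^[n+1] ω) 1 b) = 0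
    have := equivar_apply D (σ.symm^[n+1] ω) b
    rw [hσ1] at this
    rw [this, bker_apply D ω (n+1) x, map_zero]
  · -- 𝒜 (σ.symm^[n] ω) n (𝒜 (σ.symm^[n+1] ω) 1 b) = Qp D ω x
    have := step1' hcoc (σ.symm^[n+1] ω) n b
    rw [hσ1] at this
    rw [← this, hb, invr_apply D ω (n+1) x]


end Alg

section Env
variable {Ω : Type*} [MeasurableSpace Ω]
noncomputable def envE (σ : Ω ≃ᵐ Ω) (K : Ω → ℝ) (ε : ℝ) (ω : Ω) : ℝ≥0∞ :=
  ⨆ n : ℕ, max (ENNReal.ofReal (K (σ^[n] ω) * Real.exp (-(ε * n))))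
    (ENNReal.ofReal (K (σ.symm^[n] ω) * Real.exp (-(ε * n))))

noncomputable def envK (σ : Ω ≃ᵐ Ω) (K : Ω → ℝ) (ε : ℝ) (ω : Ω) : ℝ :=
  max 1 (envE σ K ε ω).toReal

variable {σ : Ω ≃ᵐ Ω} {K : Ω → ℝ} {ε : ℝ}

lemma envE_symm (ω : Ω) : envE σ.symm K ε ω = envE σ K ε ω := by
  unfold envE
  rw [MeasurableEquiv.symm_symm]
  exact iSup_congr fun n => max_comm _ _

lemma envK_symm (ω : Ω) : envK σ.symm K ε ω = envK σ K ε ω := by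
  unfold envK; rw [envE_symm]

lemma measurable_envK (hk : Measurable K) : Measurable (envK σ K ε) := by
  apply Measurable.max measurable_const
  apply Measurable.ennreal_toReal
  apply Measurable.iSup
  intro n
  exact ((ENNReal.measurable_ofReal.comp
      ((hk.comp (σ.measurable.iterate n)).mul_const _)).max
    (ENNReal.measurable_ofReal.comp
      ((hk.comp (σ.symm.measurable.iterate n)).mul_const _)))

lemma one_le_envK (ω : Ω) : 1 ≤ envK σ K ε ω := le_max_left _ _

lemma envK_pos (ω : Ω) : 0 < envK σ K ε ω := lt_of_lt_of_le one_pos (one_le_envK ω)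

lemma le_envE_f (ω : Ω) (n : ℕ) :
    ENNReal.ofReal (K (σ^[n] ω) * Real.exp (-(ε * n))) ≤ envE σ K ε ω := by
  have h := le_iSup (fun n : ℕ => max (ENNReal.ofReal (K (σ^[n] ω) * Real.exp (-(ε * n))))
    (ENNReal.ofReal (K (σ.symm^[n] ω) * Real.exp (-(ε * n))))) n
  exact le_trans (le_max_left _ _) h

lemma le_envE_b (ω : Ω) (n : ℕ) :
    ENNReal.ofReal (K (σ.symm^[n] ω) * Real.exp (-(ε * n))) ≤ envE σ K ε ω := by
  have h := le_iSup (fun n : ℕ => max (ENNReal.ofReal (K (σ^[n] ω) * Real.exp (-(ε * n))))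
    (ENNReal.ofReal (K (σ.symm^[n] ω) * Real.exp (-(ε * n))))) n
  exact le_trans (le_max_right _ _) h

lemma K_le_envK_f (hK0 : ∀ ω, 0 ≤ K ω) (ω : Ω) (h : envE σ K ε ω ≠ ⊤) (n : ℕ) :
    K (σ^[n] ω) ≤ envK σ K ε ω * Real.exp (ε * n) := by
  have h1 : K (σ^[n] ω) * Real.exp (-(ε * n)) ≤ (envE σ K ε ω).toReal := by
    have := ENNReal.toReal_mono h (le_envE_f (K := K) (ε := ε) ω n)
    rwa [ENNReal.toReal_ofReal (mul_nonneg (hK0 _) (Real.exp_pos _).le)] at this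
  have h2 : (envE σ K ε ω).toReal ≤ envK σ K ε ω := le_max_right _ _
  have h3 := mul_le_mul_of_nonneg_right (h1.trans h2) (Real.exp_pos (ε * n)).le
  rwa [mul_assoc, ← Real.exp_add, neg_add_cancel, Real.exp_zero, mul_one] at h3

lemma K_le_envK_b (hK0 : ∀ ω, 0 ≤ K ω) (ω : Ω) (h : envE σ K ε ω ≠ ⊤) (n : ℕ) :
    K (σ.symm^[n] ω) ≤ envK σ K ε ω * Real.exp (ε * n) := by
  have h1 : K (σ.symm^[n] ω) * Real.exp (-(ε * n)) ≤ (envE σ K ε ω).toReal := by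
    have := ENNReal.toReal_mono h (le_envE_b (K := K) (ε := ε) ω n)
    rwa [ENNReal.toReal_ofReal (mul_nonneg (hK0 _) (Real.exp_pos _).le)] at this
  have h2 : (envE σ K ε ω).toReal ≤ envK σ K ε ω := le_max_right _ _
  have h3 := mul_le_mul_of_nonneg_right (h1.trans h2) (Real.exp_pos (ε * n)).le
  rwa [mul_assoc, ← Real.exp_add, neg_add_cancel, Real.exp_zero, mul_one] at h3

lemma envE_shift (hK0 : ∀ ω, 0 ≤ K ω) (hε : 0 ≤ ε) (ω : Ω) :
    envE σ K ε (σ ω) ≤ ENNReal.ofReal (Real.exp ε) * envE σ K ε ω := by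
  have hexp1 : (1 : ℝ≥0∞) ≤ ENNReal.ofReal (Real.exp ε) := by
    rw [show (1:ℝ≥0∞) = ENNReal.ofReal 1 by simp]
    exact ENNReal.ofReal_le_ofReal (Real.one_le_exp hε)
  refine iSup_le fun m => max_le ?_ ?_
  · -- forward term
    have hit : σ^[m] (σ ω) = σ^[m+1] ω := (Function.iterate_succ_apply σ m ω).symm
    rw [hit]
    have : K (σ^[m+1] ω) * Real.exp (-(ε * m)) =
        Real.exp ε * (K (σ^[m+1] ω) * Real.exp (-(ε * (m+1)))) := by
      rw [show (-(ε * (m:ℕ))) = ε + -(ε * ((m:ℕ)+1)) by push_cast; ring]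
      rw [Real.exp_add]; ring
    rw [this, ENNReal.ofReal_mul (Real.exp_pos ε).le]
    refine mul_le_mul_right ?_ _
    have := le_envE_f (σ := σ) (K := K) (ε := ε) ω (m+1)
    rwa [show ((m+1 : ℕ) : ℝ) = ((m:ℝ)+1) by push_cast; ring] at this
  · -- backward term
    cases m with
    | zero =>
      simp only [Function.iterate_zero_apply]
      have hexp : Real.exp ε * Real.exp (-(ε * ((1:ℕ):ℝ))) = 1 := by
        rw [← Real.exp_add]; norm_num
      have : K (σ ω) * Real.exp (-(ε * ((0:ℕ):ℝ))) =
          Real.exp ε * (K (σ^[1] ω) * Real.exp (-(ε * ((1:ℕ):ℝ)))) := by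
        rw [Function.iterate_one]
        calc K (σ ω) * Real.exp (-(ε * ((0:ℕ):ℝ))) = K (σ ω) := by norm_num
          _ = K (σ ω) * (Real.exp ε * Real.exp (-(ε * ((1:ℕ):ℝ)))) := by
              rw [hexp, mul_one]
          _ = Real.exp ε * (K (σ ω) * Real.exp (-(ε * ((1:ℕ):ℝ)))) := by ring
      rw [this, ENNReal.ofReal_mul (Real.exp_pos ε).le]
      exact mul_le_mul_right (le_envE_f ω 1) _
    | succ k =>
      have hit : σ.symm^[k+1] (σ ω) = σ.symm^[k] ω := by
        rw [Function.iterate_succ_apply, σ.symm_apply_apply]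
      rw [hit]
      have hle : K (σ.symm^[k] ω) * Real.exp (-(ε * (k+1:ℕ))) ≤
          K (σ.symm^[k] ω) * Real.exp (-(ε * k)) := by
        apply mul_le_mul_of_nonneg_left _ (hK0 _)
        apply Real.exp_le_exp.mpr
        push_cast
        nlinarith [Nat.cast_nonneg (α := ℝ) k]
      calc ENNReal.ofReal (K (σ.symm^[k] ω) * Real.exp (-(ε * (k+1:ℕ))))
          ≤ ENNReal.ofReal (K (σ.symm^[k] ω) * Real.exp (-(ε * k))) :=
            ENNReal.ofReal_le_ofReal hle
        _ ≤ envE σ K ε ω := le_envE_b ω k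
        _ ≤ ENNReal.ofReal (Real.exp ε) * envE σ K ε ω := by
            conv_lhs => rw [← one_mul (envE σ K ε ω)]
            exact mul_le_mul_left hexp1 _

lemma envE_shift_symm (hK0 : ∀ ω, 0 ≤ K ω) (hε : 0 ≤ ε) (ω : Ω) :
    envE σ K ε (σ.symm ω) ≤ ENNReal.ofReal (Real.exp ε) * envE σ K ε ω := by
  have := envE_shift (σ := σ.symm) (K := K) (ε := ε) hK0 hε ω
  rwa [envE_symm, envE_symm] at this

lemma envE_shift_ne_top (hK0 : ∀ ω, 0 ≤ K ω) (hε : 0 ≤ ε) (ω : Ω)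
    (h : envE σ K ε ω ≠ ⊤) :
    envE σ K ε (σ ω) ≠ ⊤ ∧ envE σ K ε (σ.symm ω) ≠ ⊤ := by
  constructor
  · exact ne_top_of_le_ne_top (ENNReal.mul_ne_top ENNReal.ofReal_ne_top h)
      (envE_shift hK0 hε ω)
  · exact ne_top_of_le_ne_top (ENNReal.mul_ne_top ENNReal.ofReal_ne_top h)
      (envE_shift_symm hK0 hε ω)

lemma envK_shift (hK0 : ∀ ω, 0 ≤ K ω) (hε : 0 ≤ ε) (ω : Ω) (h : envE σ K ε ω ≠ ⊤) :
    envK σ K ε (σ ω) ≤ Real.exp ε * envK σ K ε ω := by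
  have h1 : (envE σ K ε (σ ω)).toReal ≤ Real.exp ε * (envE σ K ε ω).toReal := by
    have := ENNReal.toReal_mono (ENNReal.mul_ne_top ENNReal.ofReal_ne_top h)
      (envE_shift (σ := σ) (K := K) hK0 hε ω)
    rwa [ENNReal.toReal_mul, ENNReal.toReal_ofReal (Real.exp_pos ε).le] at this
  have he1 : (1:ℝ) ≤ Real.exp ε := Real.one_le_exp hε
  refine max_le ?_ ?_
  · calc (1:ℝ) ≤ Real.exp ε := he1
      _ = Real.exp ε * 1 := (mul_one _).symm
      _ ≤ Real.exp ε * envK σ K ε ω :=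
          mul_le_mul_of_nonneg_left (one_le_envK ω) (Real.exp_pos ε).le
  · exact h1.trans (mul_le_mul_of_nonneg_left (le_max_right _ _) (Real.exp_pos ε).le)

lemma envK_shift_symm (hK0 : ∀ ω, 0 ≤ K ω) (hε : 0 ≤ ε) (ω : Ω) (h : envE σ K ε ω ≠ ⊤) :
    envK σ K ε (σ.symm ω) ≤ Real.exp ε * envK σ K ε ω := by
  have h' : envE σ.symm K ε ω ≠ ⊤ := by rwa [envE_symm]
  have := envK_shift (σ := σ.symm) (K := K) hK0 hε ω h'
  rwa [envK_symm, envK_symm] at this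

lemma envE_iter_ne_top_f (hK0 : ∀ ω, 0 ≤ K ω) (hε : 0 ≤ ε) (ω : Ω)
    (h : envE σ K ε ω ≠ ⊤) (n : ℕ) : envE σ K ε (σ^[n] ω) ≠ ⊤ := by
  induction n with
  | zero => simpa using h
  | succ n ih =>
    rw [Function.iterate_succ_apply']
    exact (envE_shift_ne_top hK0 hε _ ih).1

lemma envE_iter_ne_top_b (hK0 : ∀ ω, 0 ≤ K ω) (hε : 0 ≤ ε) (ω : Ω)
    (h : envE σ K ε ω ≠ ⊤) (n : ℕ) : envE σ K ε (σ.symm^[n] ω) ≠ ⊤ := by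
  induction n with
  | zero => simpa using h
  | succ n ih =>
    rw [Function.iterate_succ_apply']
    exact (envE_shift_ne_top hK0 hε _ ih).2

lemma envK_iter_f (hK0 : ∀ ω, 0 ≤ K ω) (hε : 0 ≤ ε) (ω : Ω)
    (h : envE σ K ε ω ≠ ⊤) (n : ℕ) :
    envK σ K ε (σ^[n] ω) ≤ Real.exp (ε * n) * envK σ K ε ω := by
  induction n with
  | zero => simp
  | succ n ih =>
    rw [Function.iterate_succ_apply']
    calc envK σ K ε (σ (σ^[n] ω)) ≤ Real.exp ε * envK σ K ε (σ^[n] ω) :=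
          envK_shift hK0 hε _ (envE_iter_ne_top_f hK0 hε ω h n)
      _ ≤ Real.exp ε * (Real.exp (ε * n) * envK σ K ε ω) :=
          mul_le_mul_of_nonneg_left ih (Real.exp_pos ε).le
      _ = Real.exp (ε * (n+1:ℕ)) * envK σ K ε ω := by
          rw [← mul_assoc, ← Real.exp_add]; push_cast; ring_nf

lemma envK_iter_b (hK0 : ∀ ω, 0 ≤ K ω) (hε : 0 ≤ ε) (ω : Ω)
    (h : envE σ K ε ω ≠ ⊤) (n : ℕ) :
    envK σ K ε (σ.symm^[n] ω) ≤ Real.exp (ε * n) * envK σ K ε ω := by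
  have h' : envE σ.symm K ε ω ≠ ⊤ := by rwa [envE_symm]
  have := envK_iter_f (σ := σ.symm) (K := K) hK0 hε ω h' n
  rwa [envK_symm, envK_symm] at this




lemma exists_orbit_bound {w : ℕ → Ω} (hK1 : ∀ ω, 1 ≤ K ω) {δ : ℝ} (hδ : 0 < δ)
    (h : Tendsto (fun n : ℕ => Real.log (K (w n)) / n) atTop (nhds 0)) :
    ∃ c : ℝ, 1 ≤ c ∧ ∀ j : ℕ, K (w j) ≤ c * Real.exp (δ * j) := by
  have hKpos : ∀ ω, (0:ℝ) < K ω := fun ω => lt_of_lt_of_le one_pos (hK1 ω)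
  set a : ℕ → ℝ := fun j => K (w j) * Real.exp (-(δ * j)) with ha
  have h1 : Tendsto (fun j : ℕ => (Real.log (K (w j)) / j - δ) * j) atTop atBot :=
    Filter.Tendsto.neg_mul_atTop (by linarith : -δ < 0) (by simpa using h.sub_const δ)
      tendsto_natCast_atTop_atTop
  have h2 : Tendsto a atTop (nhds 0) := by
    have h3 : Tendsto (fun j : ℕ => Real.exp ((Real.log (K (w j)) / j - δ) * j))
        atTop (nhds 0) := Real.tendsto_exp_atBot.comp h1
    apply h3.congr'
    filter_upwards [eventually_ge_atTop 1] with j hj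
    have hj0 : (j:ℝ) ≠ 0 := Nat.cast_ne_zero.mpr (by omega)
    rw [sub_mul, div_mul_cancel₀ _ hj0, Real.exp_sub, Real.exp_log (hKpos _)]
    simp only [ha]
    rw [Real.exp_neg, div_eq_mul_inv]
  obtain ⟨c₀, hc₀⟩ := h2.bddAbove_range
  refine ⟨max 1 c₀, le_max_left _ _, fun j => ?_⟩
  have haj : a j ≤ c₀ := hc₀ (Set.mem_range_self j)
  have hKj : K (w j) = a j * Real.exp (δ * j) := by
    simp only [ha]
    rw [mul_assoc, ← Real.exp_add, neg_add_cancel, Real.exp_zero, mul_one]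
  rw [hKj]
  exact mul_le_mul_of_nonneg_right (haj.trans (le_max_right _ _)) (Real.exp_pos _).le

lemma envK_le_exp (hK1 : ∀ ω, 1 ≤ K ω) (hε : 0 < ε) {δ c : ℝ} (hδ : 0 < δ) (hδε : δ ≤ ε)
    (hc : 1 ≤ c) (ω : Ω)
    (hcf : ∀ j : ℕ, K (σ^[j] ω) ≤ c * Real.exp (δ * j))
    (hcb : ∀ j : ℕ, K (σ.symm^[j] ω) ≤ c * Real.exp (δ * j)) (n : ℕ) :
    envK σ K ε (σ^[n] ω) ≤ c * Real.exp (δ * n) := by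
  have hδn : (0:ℝ) ≤ δ * n := by positivity
  have hcn : (1:ℝ) ≤ c * Real.exp (δ * n) := by
    have := Real.one_le_exp hδn
    nlinarith
  refine max_le hcn ?_
  have hE : envE σ K ε (σ^[n] ω) ≤ ENNReal.ofReal (c * Real.exp (δ * n)) := by
    refine iSup_le fun m => max_le ?_ ?_
    · rw [← Function.iterate_add_apply]
      apply ENNReal.ofReal_le_ofReal
      have h1 := hcf (m + n)
      have h2 : c * Real.exp (δ * ((m:ℝ) + n)) * Real.exp (-(ε * m)) ≤
          c * Real.exp (δ * n) := by
        rw [mul_assoc, ← Real.exp_add]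
        apply mul_le_mul_of_nonneg_left _ (by linarith)
        apply Real.exp_le_exp.mpr
        nlinarith [Nat.cast_nonneg (α := ℝ) m]
      calc K (σ^[m + n] ω) * Real.exp (-(ε * m))
          ≤ (c * Real.exp (δ * ((m:ℝ) + n))) * Real.exp (-(ε*m)) := by
            apply mul_le_mul_of_nonneg_right _ (Real.exp_pos _).le
            have hc2 := h1; push_cast at hc2; exact hc2
        _ ≤ c * Real.exp (δ * n) := h2
    · rcases le_or_gt m n with hmn | hmn
      · rw [symm_iter_of_iter_le σ hmn]
        apply ENNReal.ofReal_le_ofReal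
        have h1 := hcf (n - m)
        have hcast : ((n - m : ℕ) : ℝ) = (n:ℝ) - m := by
          rw [Nat.cast_sub hmn]
        rw [hcast] at h1
        have h2 : c * Real.exp (δ * ((n:ℝ) - m)) * Real.exp (-(ε * m)) ≤
            c * Real.exp (δ * n) := by
          rw [mul_assoc, ← Real.exp_add]
          apply mul_le_mul_of_nonneg_left _ (by linarith)
          apply Real.exp_le_exp.mpr
          nlinarith [Nat.cast_nonneg (α := ℝ) m]
        calc K (σ^[n - m] ω) * Real.exp (-(ε * m))
            ≤ (c * Real.exp (δ * ((n:ℝ) - m))) * Real.exp (-(ε*m)) :=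
              mul_le_mul_of_nonneg_right h1 (Real.exp_pos _).le
          _ ≤ c * Real.exp (δ * n) := h2
      · rw [symm_iter_of_iter_ge σ hmn.le]
        apply ENNReal.ofReal_le_ofReal
        have h1 := hcb (m - n)
        have hcast : ((m - n : ℕ) : ℝ) = (m:ℝ) - n := by
          rw [Nat.cast_sub hmn.le]
        rw [hcast] at h1
        have hnm : (n:ℝ) ≤ m := Nat.cast_le.mpr hmn.le
        have h2 : c * Real.exp (δ * ((m:ℝ) - n)) * Real.exp (-(ε * m)) ≤
            c * Real.exp (δ * n) := by
          rw [mul_assoc, ← Real.exp_add]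
          apply mul_le_mul_of_nonneg_left _ (by linarith)
          apply Real.exp_le_exp.mpr
          nlinarith [Nat.cast_nonneg (α := ℝ) n, Nat.cast_nonneg (α := ℝ) m]
        calc K (σ.symm^[m - n] ω) * Real.exp (-(ε * m))
            ≤ (c * Real.exp (δ * ((m:ℝ) - n))) * Real.exp (-(ε*m)) :=
              mul_le_mul_of_nonneg_right h1 (Real.exp_pos _).le
          _ ≤ c * Real.exp (δ * n) := h2
  exact ENNReal.toReal_le_of_le_ofReal (le_trans zero_le_one hcn) hE

lemma envK_tempered_f (hK1 : ∀ ω, 1 ≤ K ω) (hε : 0 < ε) (ω : Ω)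
    (hf : Tendsto (fun n : ℕ => Real.log (K (σ^[n] ω)) / n) atTop (nhds 0))
    (hb : Tendsto (fun n : ℕ => Real.log (K (σ.symm^[n] ω)) / n) atTop (nhds 0)) :
    Tendsto (fun n : ℕ => Real.log (envK σ K ε (σ^[n] ω)) / n) atTop (nhds 0) := by
  rw [Metric.tendsto_atTop]
  intro η hη
  set δ := min (η / 4) ε with hδdef
  have hδ : 0 < δ := lt_min (by linarith) hε
  obtain ⟨cf, hcf1, hcf⟩ := exists_orbit_bound hK1 hδ hf
  obtain ⟨cb, hcb1, hcb⟩ := exists_orbit_bound hK1 hδ hb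
  have hc1 : 1 ≤ max cf cb := le_trans hcf1 (le_max_left _ _)
  have hbound : ∀ n : ℕ, envK σ K ε (σ^[n] ω) ≤ (max cf cb) * Real.exp (δ * n) :=
    fun n => envK_le_exp hK1 hε hδ (min_le_right _ _) hc1 ω
      (fun j => (hcf j).trans
        (mul_le_mul_of_nonneg_right (le_max_left _ _) (Real.exp_pos _).le))
      (fun j => (hcb j).trans
        (mul_le_mul_of_nonneg_right (le_max_right _ _) (Real.exp_pos _).le)) n
  have hlogc : Tendsto (fun n : ℕ => Real.log (max cf cb) / n) atTop (nhds 0) :=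
    tendsto_const_div_atTop_nhds_zero_nat _
  rw [Metric.tendsto_atTop] at hlogc
  obtain ⟨N₁, hN₁⟩ := hlogc (η/2) (by linarith)
  refine ⟨max N₁ 1, fun n hn => ?_⟩
  have hn1 : 1 ≤ n := le_trans (le_max_right _ _) hn
  have hnN : N₁ ≤ n := le_trans (le_max_left _ _) hn
  have hnpos : (0:ℝ) < n := by exact_mod_cast Nat.lt_of_lt_of_le Nat.zero_lt_one hn1
  have h1 : 0 ≤ Real.log (envK σ K ε (σ^[n] ω)) := Real.log_nonneg (one_le_envK _)
  have h2 : Real.log (envK σ K ε (σ^[n] ω)) ≤ Real.log (max cf cb) + δ * n := by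
    have hlog := (Real.log_le_log_iff (envK_pos _)
      (by positivity : (0:ℝ) < (max cf cb) * Real.exp (δ * n))).mpr (hbound n)
    rwa [Real.log_mul (by linarith) (Real.exp_ne_zero _), Real.log_exp] at hlog
  rw [Real.dist_eq, sub_zero, abs_of_nonneg (div_nonneg h1 hnpos.le)]
  have h3 : Real.log (envK σ K ε (σ^[n] ω)) / n ≤ Real.log (max cf cb) / n + δ := by
    have h4 : Real.log (envK σ K ε (σ^[n] ω)) / n ≤
        (Real.log (max cf cb) + δ * n) / n := by gcongr
    rwa [add_div, mul_div_assoc, div_self (ne_of_gt hnpos), mul_one] at h4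
  have h5 : Real.log (max cf cb) / n < η/2 := by
    have hd := hN₁ n hnN
    rw [Real.dist_eq, sub_zero] at hd
    exact lt_of_le_of_lt (le_abs_self _) hd
  have hδ2 : δ ≤ η/4 := min_le_left _ _
  linarith


lemma envK_tempered_b {σ : Ω ≃ᵐ Ω} {K : Ω → ℝ} {ε : ℝ} (hK1 : ∀ ω, 1 ≤ K ω) (hε : 0 < ε) (ω : Ω)
    (hf : Filter.Tendsto (fun n : ℕ => Real.log (K (σ^[n] ω)) / n) Filter.atTop (nhds 0))
    (hb : Filter.Tendsto (fun n : ℕ => Real.log (K (σ.symm^[n] ω)) / n) Filter.atTop (nhds 0)) :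
    Filter.Tendsto (fun n : ℕ => Real.log (envK σ K ε (σ.symm^[n] ω)) / n) Filter.atTop (nhds 0) := by
  have hb' : Filter.Tendsto (fun n : ℕ => Real.log (K (σ.symm.symm^[n] ω)) / n) Filter.atTop (nhds 0) := by
    rw [MeasurableEquiv.symm_symm]; exact hf
  have h := envK_tempered_f (σ := σ.symm) hK1 hε ω hb hb'
  refine h.congr fun n => ?_
  rw [envK_symm]

end Env

section UMeas
variable {Ω X : Type*} [MeasurableSpace Ω]
  [NormedAddCommGroup X] [NormedSpace ℝ X] [MeasurableSpace X] [BorelSpace X]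
  [TopologicalSpace.SeparableSpace X]
variable {μ : MeasureTheory.Measure Ω} {σ : Ω ≃ᵐ Ω} {𝒜 : Ω → ℕ → X →L[ℝ] X}

lemma measurable_A_apply (hcoc : IsCocycle (⇑σ) 𝒜)
    (hmeas : ∀ x : X, Measurable fun ω => 𝒜 ω 1 x) (n : ℕ) (x : X) :
    Measurable fun ω => 𝒜 ω n x := by
  induction n with
  | zero =>
    simp only [zero_apply' hcoc]
    exact measurable_const
  | succ n ih =>
    have he : (fun ω => 𝒜 ω (n+1) x) = fun ω => 𝒜 (σ^[n] ω) 1 (𝒜 ω n x) :=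
      funext fun ω => step1 hcoc ω n x
    rw [he]
    exact measurable_clm_apply (T := fun ω => 𝒜 (σ^[n] ω) 1)
      (fun y => (hmeas y).comp (σ.measurable.iterate n)) ih

lemma measurable_An (hcoc : IsCocycle (⇑σ) 𝒜)
    (hmeas : ∀ x : X, Measurable fun ω => 𝒜 ω 1 x) (n : ℕ) {h : Ω → X}
    (hh : Measurable h) : Measurable fun ω => 𝒜 ω n (h ω) :=
  measurable_clm_apply (fun x => measurable_A_apply hcoc hmeas n x) hh

lemma ae_comp {T : Ω → Ω} (hT : MeasureTheory.MeasurePreserving T μ μ) {p : Ω → Prop}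
    (h : ∀ᵐ ω ∂μ, p ω) : ∀ᵐ ω ∂μ, p (T ω) :=
  hT.quasiMeasurePreserving.ae h

lemma aemeasurable_u (hcoc : IsCocycle (⇑σ) 𝒜) (D : Dichotomy μ σ 𝒜)
    (hmeas : ∀ x : X, Measurable fun ω => 𝒜 ω 1 x)
    (hσ : MeasureTheory.MeasurePreserving (⇑σ) μ μ)
    {g : Ω → X} (hg : Measurable g) (n : ℕ) :
    AEMeasurable (fun ω => D.B (σ^[n] ω) n (Qp D (σ^[n] ω) (g (σ^[n] ω)))) μ := by
  haveI : Nonempty X := ⟨0⟩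
  haveI : SecondCountableTopology X := UniformSpace.secondCountable_of_separable X
  set u : Ω → X := fun ω => D.B (σ^[n] ω) n (Qp D (σ^[n] ω) (g (σ^[n] ω))) with hu
  set v : Ω → X := fun ω => Qp D (σ^[n] ω) (g (σ^[n] ω)) with hv
  have hgn : Measurable fun ω => g (σ^[n] ω) := hg.comp (σ.measurable.iterate n)
  have hv_meas : Measurable v := by
    have h2 : Measurable fun ω => D.P (σ^[n] ω) (g (σ^[n] ω)) :=
      measurable_clm_apply (T := fun ω => D.P (σ^[n] ω))
        (fun x => (D.P_meas x).comp (σ.measurable.iterate n)) hgn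
    exact (hgn.sub h2 : Measurable fun ω => g (σ^[n] ω) - D.P (σ^[n] ω) (g (σ^[n] ω)))
  have hPu : ∀ ω, D.P ω (u ω) = 0 := fun ω => by
    have h := bker_apply D (σ^[n] ω) n (g (σ^[n] ω))
    rwa [symm_iter_iter] at h
  have hAu : ∀ ω, 𝒜 ω n (u ω) = v ω := fun ω => by
    have h := invr_apply D (σ^[n] ω) n (g (σ^[n] ω))
    rwa [symm_iter_iter] at h
  set d : ℕ → X := TopologicalSpace.denseSeq X with hd
  have hdd : DenseRange d := TopologicalSpace.denseRange_denseSeq X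
  set p : ℕ → ℕ → Ω → Prop := fun m k ω =>
    ‖D.P ω (d k)‖ ≤ 1/(m+1) ∧ ‖𝒜 ω n (d k) - v ω‖ ≤ 1/(m+1) with hp
  have hex : ∀ m ω, ∃ k, p m k ω := by
    intro m ω
    have hden : (0:ℝ) < 1 + ‖D.P ω‖ + ‖𝒜 ω n‖ := by positivity
    set r := (1/(m+1) : ℝ) / (1 + ‖D.P ω‖ + ‖𝒜 ω n‖) with hr
    have hrpos : 0 < r := by
      apply div_pos _ hden
      positivity
    obtain ⟨k, hk⟩ := hdd.exists_dist_lt (u ω) hrpos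
    rw [dist_comm, dist_eq_norm] at hk
    have hm1 : (0:ℝ) < 1/(m+1) := by positivity
    refine ⟨k, ?_, ?_⟩
    · have heq : D.P ω (d k) = D.P ω (d k - u ω) := by rw [map_sub, hPu, sub_zero]
      rw [heq]
      calc ‖D.P ω (d k - u ω)‖ ≤ ‖D.P ω‖ * ‖d k - u ω‖ := (D.P ω).le_opNorm _
        _ ≤ (1 + ‖D.P ω‖ + ‖𝒜 ω n‖) * r := by
            apply mul_le_mul _ hk.le (norm_nonneg _) (by linarith)
            linarith [norm_nonneg (𝒜 ω n)]
        _ = 1/(m+1) := by rw [hr]; field_simp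
    · have heq : 𝒜 ω n (d k) - v ω = 𝒜 ω n (d k - u ω) := by
        rw [map_sub, hAu]
      rw [heq]
      calc ‖𝒜 ω n (d k - u ω)‖ ≤ ‖𝒜 ω n‖ * ‖d k - u ω‖ := (𝒜 ω n).le_opNorm _
        _ ≤ (1 + ‖D.P ω‖ + ‖𝒜 ω n‖) * r := by
            apply mul_le_mul _ hk.le (norm_nonneg _) (by linarith)
            linarith [norm_nonneg (D.P ω)]
        _ = 1/(m+1) := by rw [hr]; field_simp
  have hpm : ∀ m k, MeasurableSet {ω | p m k ω} := by
    intro m k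
    apply MeasurableSet.inter
    · exact measurableSet_le (D.P_meas (d k)).norm measurable_const
    · exact measurableSet_le
        ((measurable_A_apply hcoc hmeas n (d k)).sub hv_meas).norm measurable_const
  have hsel_meas : ∀ m : ℕ, Measurable fun ω => d (Nat.find (hex m ω)) := by
    intro m
    have hfind : Measurable fun ω => Nat.find (hex m ω) := by
      apply measurable_to_nat
      intro ω
      set N := Nat.find (hex m ω) with hN
      have hset : (fun x => Nat.find (hex m x)) ⁻¹' {N} =
          {x | p m N x} ∩ ⋂ (j : ℕ) (_ : j < N), {x | p m j x}ᶜ := by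
        ext x
        simp only [Set.mem_preimage, Set.mem_singleton_iff, Nat.find_eq_iff,
          Set.mem_inter_iff, Set.mem_setOf_eq, Set.mem_iInter, Set.mem_compl_iff]
      rw [hset]
      exact (hpm m N).inter
        (MeasurableSet.iInter fun j => MeasurableSet.iInter fun _ => (hpm m j).compl)
    exact measurable_from_top.comp hfind
  have hbu : ∀ᵐ ω ∂μ, ∀ j : ℕ, ‖(D.B (σ^[n] ω) j).comp
      (ContinuousLinearMap.id ℝ X - D.P (σ^[n] ω))‖ ≤
      D.K (σ^[n] ω) * Real.exp (-D.lam * j) :=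
    ae_comp (hσ.iterate n) D.bound_u
  refine aemeasurable_of_tendsto_metrizable_ae'
    (fun m => (hsel_meas m).aemeasurable) ?_
  filter_upwards [hbu] with ω hω
  have hKe : (0:ℝ) ≤ D.K (σ^[n] ω) * Real.exp (-D.lam * n) :=
    le_trans (norm_nonneg _) (hω n)
  have herr : ∀ m : ℕ, ‖d (Nat.find (hex m ω)) - u ω‖ ≤
      (1 + D.K (σ^[n] ω) * Real.exp (-D.lam * n)) * (1/(m+1)) := by
    intro m
    obtain ⟨h1, h2⟩ := Nat.find_spec (hex m ω)
    set e : X := d (Nat.find (hex m ω)) - u ω with he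
    have hPe : D.P ω e = D.P ω (d (Nat.find (hex m ω))) := by
      rw [he, map_sub, hPu, sub_zero]
    have hAe : 𝒜 ω n e = 𝒜 ω n (d (Nat.find (hex m ω))) - v ω := by
      rw [he, map_sub, hAu]
    have hQe : Qp D ω e = ((D.B (σ^[n] ω) n).comp
        (ContinuousLinearMap.id ℝ X - D.P (σ^[n] ω))) (𝒜 ω n e) := by
      have hinvl := invl_apply D (σ^[n] ω) n e
      rw [symm_iter_iter] at hinvl
      have heq : 𝒜 ω n (Qp D ω e) = Qp D (σ^[n] ω) (𝒜 ω n e) :=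
        (equivar_n_Q hcoc D ω n e).symm
      rw [heq] at hinvl
      rw [← hinvl]
      rfl
    have hQe_norm : ‖Qp D ω e‖ ≤
        D.K (σ^[n] ω) * Real.exp (-D.lam * n) * (1/(m+1)) := by
      rw [hQe]
      calc ‖((D.B (σ^[n] ω) n).comp
          (ContinuousLinearMap.id ℝ X - D.P (σ^[n] ω))) (𝒜 ω n e)‖
          ≤ ‖(D.B (σ^[n] ω) n).comp
            (ContinuousLinearMap.id ℝ X - D.P (σ^[n] ω))‖ * ‖𝒜 ω n e‖ :=
            ContinuousLinearMap.le_opNorm _ _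
        _ ≤ D.K (σ^[n] ω) * Real.exp (-D.lam * n) * (1/(m+1)) := by
            apply mul_le_mul (hω n) _ (norm_nonneg _) hKe
            rw [hAe]; exact h2
    have hsplit : e = D.P ω e + Qp D ω e := (P_add_Qp D ω e).symm
    calc ‖e‖ = ‖D.P ω e + Qp D ω e‖ := by rw [← hsplit]
      _ ≤ ‖D.P ω e‖ + ‖Qp D ω e‖ := norm_add_le _ _
      _ ≤ 1/(m+1) + D.K (σ^[n] ω) * Real.exp (-D.lam * n) * (1/(m+1)) := by
          apply add_le_add _ hQe_norm
          rw [hPe]; exact h1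
      _ = (1 + D.K (σ^[n] ω) * Real.exp (-D.lam * n)) * (1/(m+1)) := by ring
  have h0 : Filter.Tendsto (fun m : ℕ =>
      (1 + D.K (σ^[n] ω) * Real.exp (-D.lam * n)) * (1/((m:ℝ)+1)))
      Filter.atTop (nhds 0) := by
    have ht := tendsto_one_div_add_atTop_nhds_zero_nat (𝕜 := ℝ)
    simpa using ht.const_mul (1 + D.K (σ^[n] ω) * Real.exp (-D.lam * n))
  rw [tendsto_iff_dist_tendsto_zero]
  apply squeeze_zero (fun m => dist_nonneg) _ h0
  intro m
  rw [dist_eq_norm]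
  exact herr m

end UMeas

section Extra
variable {Ω : Type*} [MeasurableSpace Ω] {σ : Ω ≃ᵐ Ω} {K : Ω → ℝ} {ε : ℝ}

lemma envE_ne_top_of_bounds (hK0 : ∀ ω, 0 ≤ K ω) {cf cb : ℝ} (ω : Ω)
    (hcf : ∀ j : ℕ, K (σ^[j] ω) ≤ cf * Real.exp (ε * j))
    (hcb : ∀ j : ℕ, K (σ.symm^[j] ω) ≤ cb * Real.exp (ε * j)) :
    envE σ K ε ω ≠ ⊤ := by
  refine ne_top_of_le_ne_top (b := ENNReal.ofReal (max cf cb)) ENNReal.ofReal_ne_top ?_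
  refine iSup_le fun j => max_le (ENNReal.ofReal_le_ofReal ?_) (ENNReal.ofReal_le_ofReal ?_)
  · calc K (σ^[j] ω) * Real.exp (-(ε * j))
        ≤ (cf * Real.exp (ε * j)) * Real.exp (-(ε * j)) :=
          mul_le_mul_of_nonneg_right (hcf j) (Real.exp_pos _).le
      _ = cf := by rw [mul_assoc, ← Real.exp_add]; simp
      _ ≤ max cf cb := le_max_left _ _
  · calc K (σ.symm^[j] ω) * Real.exp (-(ε * j))
        ≤ (cb * Real.exp (ε * j)) * Real.exp (-(ε * j)) :=
          mul_le_mul_of_nonneg_right (hcb j) (Real.exp_pos _).le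
      _ = cb := by rw [mul_assoc, ← Real.exp_add]; simp
      _ ≤ max cf cb := le_max_right _ _

lemma temper_max1 {w : ℕ → Ω} (hK : ∀ ω, 0 < K ω)
    (h : Filter.Tendsto (fun n : ℕ => Real.log (K (w n)) / n) Filter.atTop (nhds 0)) :
    Filter.Tendsto (fun n : ℕ => Real.log (max (K (w n)) 1) / n) Filter.atTop (nhds 0) := by
  have hmax : ∀ n : ℕ, Real.log (max (K (w n)) 1) / n =
      max (Real.log (K (w n)) / n) (0 / n) := by
    intro n
    have hlm : Real.log (max (K (w n)) 1) = max (Real.log (K (w n))) 0 := by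
      rcases le_total (K (w n)) 1 with hle | hle
      · rw [max_eq_right hle, Real.log_one, max_eq_right (Real.log_nonpos (hK _).le hle)]
      · rw [max_eq_left hle, max_eq_left (Real.log_nonneg hle)]
    rw [hlm, max_div_div_right (Nat.cast_nonneg n)]
  have h2 : Filter.Tendsto (fun n : ℕ => max (Real.log (K (w n)) / n) (0 / n))
      Filter.atTop (nhds (max 0 0)) := h.max (by simpa using tendsto_const_nhds (x := (0:ℝ)))
  simp only [max_self] at h2
  exact h2.congr fun n => (hmax n).symm

end Extra

end Stmt10

/-- If a linear cocycle admits a tempered exponential dichotomy, then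
there is a tempered random variable `C > 0` such that the pair
`(L^∞_C(Ω,X), L^∞(Ω,X))` is admissible for the cocycle. -/
theorem stmt_10 {Ω X : Type*} [MeasurableSpace Ω]
    [NormedAddCommGroup X] [NormedSpace ℝ X] [CompleteSpace X]
    [MeasurableSpace X] [BorelSpace X] [TopologicalSpace.SeparableSpace X]
    (μ : Measure Ω) [IsProbabilityMeasure μ] (σ : Ω ≃ᵐ Ω)
    (hσ : MeasurePreserving σ μ μ) (herg : Ergodic (⇑σ) μ)
    (𝒜 : Ω → ℕ → X →L[ℝ] X) (hcoc : IsCocycle (⇑σ) 𝒜)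
    (hmeas : ∀ x : X, Measurable fun ω => 𝒜 ω 1 x)
    (D : Dichotomy μ σ 𝒜) :
    ∃ C : Ω → ℝ, Measurable C ∧ (∀ ω, 0 < C ω) ∧ Tempered μ σ C ∧
      Admissible μ σ (fun ω => 𝒜 ω 1) C (fun _ => 1) := by
  classical
  haveI : SecondCountableTopology X := UniformSpace.secondCountable_of_separable X
  have hσs : MeasurePreserving (⇑σ.symm) μ μ := MeasurePreserving.symm σ hσ
  have hL : (0:ℝ) < D.lam := D.lam_pos
  set ε : ℝ := D.lam / 3 with hεdef
  have hεpos : 0 < ε := by rw [hεdef]; linarith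
  set K1 : Ω → ℝ := fun ω => max (D.K ω) 1 with hK1def
  have hK1 : ∀ ω, 1 ≤ K1 ω := fun ω => le_max_right _ _
  have hK0 : ∀ ω, 0 ≤ K1 ω := fun ω => le_trans zero_le_one (hK1 ω)
  have hKK1 : ∀ ω, D.K ω ≤ K1 ω := fun ω => le_max_left _ _
  have hK1_meas : Measurable K1 := D.K_meas.max measurable_const
  set Kt : Ω → ℝ := Stmt10.envK σ K1 ε with hKtdef
  set C : Ω → ℝ := fun ω => (Kt ω)⁻¹ with hCdef
  have hKt1 : ∀ ω, 1 ≤ Kt ω := fun ω => Stmt10.one_le_envK ω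
  have hKtpos : ∀ ω, 0 < Kt ω := fun ω => Stmt10.envK_pos ω
  have hCKt : ∀ ω, C ω * Kt ω = 1 := fun ω => inv_mul_cancel₀ (hKtpos ω).ne'
  have hEfin : ∀ᵐ ω ∂μ, Stmt10.envE σ K1 ε ω ≠ ⊤ := by
    filter_upwards [D.tempered_pos, D.tempered_neg] with ω h1 h2
    obtain ⟨cf, hcf1, hcf⟩ := Stmt10.exists_orbit_bound hK1 hεpos
      (Stmt10.temper_max1 D.K_pos h1)
    obtain ⟨cb, hcb1, hcb⟩ := Stmt10.exists_orbit_bound hK1 hεpos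
      (Stmt10.temper_max1 D.K_pos h2)
    exact Stmt10.envE_ne_top_of_bounds hK0 ω hcf hcb
  refine ⟨C, (Stmt10.measurable_envK hK1_meas).inv,
    fun ω => inv_pos.mpr (hKtpos ω), ?_, ?_⟩
  · -- Tempered
    filter_upwards [D.tempered_pos, D.tempered_neg] with ω h1 h2
    have h1' := Stmt10.temper_max1 D.K_pos h1
    have h2' := Stmt10.temper_max1 D.K_pos h2
    constructor
    · have ht := (Stmt10.envK_tempered_f (ε := ε) hK1 hεpos ω h1' h2').neg
      rw [neg_zero] at ht
      refine ht.congr fun n => ?_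
      simp only [hCdef, hKtdef, Real.log_inv, neg_div]
    · have ht := (Stmt10.envK_tempered_b (ε := ε) hK1 hεpos ω h1' h2').neg
      rw [neg_zero] at ht
      refine ht.congr fun n => ?_
      simp only [hCdef, hKtdef, Real.log_inv, neg_div]
  · -- Admissible
    intro g hg
    obtain ⟨hg_meas, M, hgM⟩ := hg
    have hgM' : ∀ᵐ ω ∂μ, ‖g ω‖ ≤ M := by
      filter_upwards [hgM] with ω h; rwa [one_mul] at h
    set s : ℕ → Ω → X := fun n ω =>
      𝒜 (σ.symm^[n] ω) n (D.P (σ.symm^[n] ω) (g (σ.symm^[n] ω))) with hsdef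
    set uu : ℕ → Ω → X := fun n ω =>
      D.B (σ^[n] ω) n (Stmt10.Qp D (σ^[n] ω) (g (σ^[n] ω))) with huudef
    set F : Ω → X := fun ω => (∑' n, s n ω) - (∑' n, uu (n+1) ω) with hFdef
    have hs_meas : ∀ n, Measurable (s n) := by
      intro n
      have hgn : Measurable fun ω => g (σ.symm^[n] ω) :=
        hg_meas.comp (σ.symm.measurable.iterate n)
      have hPg : Measurable fun ω => D.P (σ.symm^[n] ω) (g (σ.symm^[n] ω)) :=
        Stmt10.measurable_clm_apply (T := fun ω => D.P (σ.symm^[n] ω))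
          (fun x => (D.P_meas x).comp (σ.symm.measurable.iterate n)) hgn
      exact Stmt10.measurable_clm_apply (T := fun ω => 𝒜 (σ.symm^[n] ω) n)
        (fun x => (Stmt10.measurable_A_apply hcoc hmeas n x).comp
          (σ.symm.measurable.iterate n)) hPg
    have huu_meas : ∀ n, AEMeasurable (uu n) μ := fun n =>
      Stmt10.aemeasurable_u hcoc D hmeas hσ hg_meas n
    set P0 : Ω → Prop := fun ω =>
      (∀ j : ℕ, ‖(𝒜 ω j).comp (D.P ω)‖ ≤ D.K ω * Real.exp (-D.lam * j)) ∧
      (∀ j : ℕ, ‖(D.B ω j).comp (ContinuousLinearMap.id ℝ X - D.P ω)‖ ≤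
        D.K ω * Real.exp (-D.lam * j)) ∧
      ‖g ω‖ ≤ M ∧ Stmt10.envE σ K1 ε ω ≠ ⊤ with hP0def
    have hP0ae : ∀ᵐ ω ∂μ, P0 ω := by
      filter_upwards [D.bound_s, D.bound_u, hgM', hEfin] with ω a b c d
      exact ⟨a, b, c, d⟩
    set Good : Ω → Prop := fun ω =>
      (∀ k : ℕ, P0 (σ^[k] ω)) ∧ (∀ k : ℕ, P0 (σ.symm^[k] ω)) with hGooddef
    have hGood : ∀ᵐ ω ∂μ, Good ω := by
      have h1 : ∀ᵐ ω ∂μ, ∀ k : ℕ, P0 (σ^[k] ω) :=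
        ae_all_iff.mpr fun k => Stmt10.ae_comp (hσ.iterate k) hP0ae
      have h2 : ∀ᵐ ω ∂μ, ∀ k : ℕ, P0 (σ.symm^[k] ω) :=
        ae_all_iff.mpr fun k => Stmt10.ae_comp (hσs.iterate k) hP0ae
      filter_upwards [h1, h2] with ω a b
      exact ⟨a, b⟩
    have hGood_symm : ∀ ω, Good ω → Good (σ.symm ω) := by
      intro ω hG
      constructor
      · intro k
        cases k with
        | zero => simpa using hG.2 1
        | succ k =>
          have hh : σ^[k+1] (σ.symm ω) = σ^[k] ω := by
            rw [Function.iterate_succ_apply, σ.apply_symm_apply]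
          rw [hh]; exact hG.1 k
      · intro k
        have hh : σ.symm^[k] (σ.symm ω) = σ.symm^[k+1] ω :=
          (Function.iterate_succ_apply σ.symm k ω).symm
        rw [hh]; exact hG.2 (k+1)
    have hGood0 : ∀ ω, Good ω → P0 ω := by
      intro ω hG
      have hh := hG.1 0
      rwa [Function.iterate_zero_apply] at hh
    have hM0 : ∀ ω, Good ω → 0 ≤ M := fun ω hG =>
      le_trans (norm_nonneg _) (hGood0 ω hG).2.2.1
    set r : ℝ := Real.exp (ε - D.lam) with hrdef
    have hr0 : 0 < r := Real.exp_pos _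
    have hr1 : r < 1 := by
      rw [hrdef, Real.exp_lt_one_iff, hεdef]; linarith
    have hexp_r : ∀ j : ℕ, Real.exp (ε * j) * Real.exp (-D.lam * j) = r ^ j := by
      intro j
      rw [hrdef, ← Real.exp_nat_mul, ← Real.exp_add]
      congr 1; ring
    have hs_bound : ∀ ω, Good ω → ∀ j : ℕ, ‖s j ω‖ ≤ Kt ω * M * r ^ j := by
      intro ω hG j
      obtain ⟨hbs, _, hgb, _⟩ := hG.2 j
      have hfin : Stmt10.envE σ K1 ε ω ≠ ⊤ := (hGood0 ω hG).2.2.2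
      have hKb : K1 (σ.symm^[j] ω) ≤ Kt ω * Real.exp (ε * j) :=
        Stmt10.K_le_envK_b hK0 ω hfin j
      have hrw : s j ω = ((𝒜 (σ.symm^[j] ω) j).comp (D.P (σ.symm^[j] ω)))
          (g (σ.symm^[j] ω)) := rfl
      rw [hrw]
      calc ‖((𝒜 (σ.symm^[j] ω) j).comp (D.P (σ.symm^[j] ω))) (g (σ.symm^[j] ω))‖
          ≤ ‖(𝒜 (σ.symm^[j] ω) j).comp (D.P (σ.symm^[j] ω))‖ * ‖g (σ.symm^[j] ω)‖ :=
            ContinuousLinearMap.le_opNorm _ _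
        _ ≤ (D.K (σ.symm^[j] ω) * Real.exp (-D.lam * j)) * M := by
            apply mul_le_mul (hbs j) hgb (norm_nonneg _)
            exact le_trans (norm_nonneg _) (hbs j)
        _ ≤ ((Kt ω * Real.exp (ε * j)) * Real.exp (-D.lam * j)) * M := by
            apply mul_le_mul_of_nonneg_right _ (hM0 ω hG)
            apply mul_le_mul_of_nonneg_right _ (Real.exp_pos _).le
            exact le_trans (hKK1 _) hKb
        _ = Kt ω * M * r ^ j := by rw [mul_assoc (Kt ω), hexp_r]; ring
    have hu_bound : ∀ ω, Good ω → ∀ j : ℕ, ‖uu j ω‖ ≤ Kt ω * M * r ^ j := by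
      intro ω hG j
      obtain ⟨_, hbu, hgb, _⟩ := hG.1 j
      have hfin : Stmt10.envE σ K1 ε ω ≠ ⊤ := (hGood0 ω hG).2.2.2
      have hKb : K1 (σ^[j] ω) ≤ Kt ω * Real.exp (ε * j) :=
        Stmt10.K_le_envK_f hK0 ω hfin j
      have hrw : uu j ω = ((D.B (σ^[j] ω) j).comp
          (ContinuousLinearMap.id ℝ X - D.P (σ^[j] ω))) (g (σ^[j] ω)) := rfl
      rw [hrw]
      calc ‖((D.B (σ^[j] ω) j).comp
            (ContinuousLinearMap.id ℝ X - D.P (σ^[j] ω))) (g (σ^[j] ω))‖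
          ≤ ‖(D.B (σ^[j] ω) j).comp
            (ContinuousLinearMap.id ℝ X - D.P (σ^[j] ω))‖ * ‖g (σ^[j] ω)‖ :=
            ContinuousLinearMap.le_opNorm _ _
        _ ≤ (D.K (σ^[j] ω) * Real.exp (-D.lam * j)) * M := by
            apply mul_le_mul (hbu j) hgb (norm_nonneg _)
            exact le_trans (norm_nonneg _) (hbu j)
        _ ≤ ((Kt ω * Real.exp (ε * j)) * Real.exp (-D.lam * j)) * M := by
            apply mul_le_mul_of_nonneg_right _ (hM0 ω hG)
            apply mul_le_mul_of_nonneg_right _ (Real.exp_pos _).le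
            exact le_trans (hKK1 _) hKb
        _ = Kt ω * M * r ^ j := by rw [mul_assoc (Kt ω), hexp_r]; ring
    have hu1_bound : ∀ ω, Good ω → ∀ j : ℕ, ‖uu (j+1) ω‖ ≤ Kt ω * M * r ^ j := by
      intro ω hG j
      refine le_trans (hu_bound ω hG (j+1)) ?_
      exact mul_le_mul_of_nonneg_left
        (pow_le_pow_of_le_one hr0.le hr1.le (Nat.le_succ j))
        (mul_nonneg (hKtpos ω).le (hM0 ω hG))
    have hgeom : ∀ ω : Ω, Summable (fun j : ℕ => Kt ω * M * r ^ j) := fun ω =>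
      (summable_geometric_of_lt_one hr0.le hr1).mul_left _
    have hsum_s : ∀ ω, Good ω → Summable (fun j => s j ω) := fun ω hG =>
      Summable.of_norm_bounded (hgeom ω) (hs_bound ω hG)
    have hsum_u1 : ∀ ω, Good ω → Summable (fun j => uu (j+1) ω) := fun ω hG =>
      Summable.of_norm_bounded (hgeom ω) (hu1_bound ω hG)
    have hsum_u : ∀ ω, Good ω → Summable (fun j => uu j ω) := fun ω hG =>
      (summable_nat_add_iff 1).mp (hsum_u1 ω hG)
    set M₂ : ℝ := M * ((1-r)⁻¹ + (1-r)⁻¹) with hM₂def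
    have htsum_norm : ∀ ω, Good ω → ‖F ω‖ ≤ Kt ω * M₂ := by
      intro ω hG
      have hnorm_s : Summable fun n => ‖s n ω‖ :=
        Summable.of_nonneg_of_le (fun _ => norm_nonneg _) (hs_bound ω hG) (hgeom ω)
      have hnorm_u : Summable fun n => ‖uu (n+1) ω‖ :=
        Summable.of_nonneg_of_le (fun _ => norm_nonneg _) (hu1_bound ω hG) (hgeom ω)
      have h1 : ‖∑' n, s n ω‖ ≤ Kt ω * M * (1-r)⁻¹ := by
        calc ‖∑' n, s n ω‖ ≤ ∑' n, ‖s n ω‖ := norm_tsum_le_tsum_norm hnorm_s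
          _ ≤ ∑' n, Kt ω * M * r ^ n :=
            Summable.tsum_le_tsum (hs_bound ω hG) hnorm_s (hgeom ω)
          _ = Kt ω * M * (1-r)⁻¹ := by
            rw [tsum_mul_left, tsum_geometric_of_lt_one hr0.le hr1]
      have h2 : ‖∑' n, uu (n+1) ω‖ ≤ Kt ω * M * (1-r)⁻¹ := by
        calc ‖∑' n, uu (n+1) ω‖ ≤ ∑' n, ‖uu (n+1) ω‖ := norm_tsum_le_tsum_norm hnorm_u
          _ ≤ ∑' n, Kt ω * M * r ^ n :=
            Summable.tsum_le_tsum (hu1_bound ω hG) hnorm_u (hgeom ω)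
          _ = Kt ω * M * (1-r)⁻¹ := by
            rw [tsum_mul_left, tsum_geometric_of_lt_one hr0.le hr1]
      calc ‖F ω‖ ≤ ‖∑' n, s n ω‖ + ‖∑' n, uu (n+1) ω‖ := norm_sub_le _ _
        _ ≤ Kt ω * M * (1-r)⁻¹ + Kt ω * M * (1-r)⁻¹ := add_le_add h1 h2
        _ = Kt ω * M₂ := by rw [hM₂def]; ring
    -- the fundamental equation at good points
    have heqn : ∀ ω, Good ω → F ω - 𝒜 (σ.symm ω) 1 (F (σ.symm ω)) = g ω := by
      intro ω hG
      have hG' : Good (σ.symm ω) := hGood_symm ω hG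
      have hclaim1 : ∀ n : ℕ, 𝒜 (σ.symm ω) 1 (s n (σ.symm ω)) = s (n+1) ω := by
        intro n
        have hpt : σ.symm^[n] (σ.symm ω) = σ.symm^[n+1] ω :=
          (Function.iterate_succ_apply σ.symm n ω).symm
        have hstep := Stmt10.step1 hcoc (σ.symm^[n+1] ω) n
          (D.P (σ.symm^[n+1] ω) (g (σ.symm^[n+1] ω)))
        have hpt2 : σ^[n] (σ.symm^[n+1] ω) = σ.symm ω := by
          rw [Stmt10.iter_of_symm_iter_le σ (Nat.le_succ n)]
          have hn1 : n + 1 - n = 1 := by omega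
          rw [hn1, Function.iterate_one]
        rw [hpt2] at hstep
        show 𝒜 (σ.symm ω) 1 (𝒜 (σ.symm^[n] (σ.symm ω)) n
          (D.P (σ.symm^[n] (σ.symm ω)) (g (σ.symm^[n] (σ.symm ω))))) = _
        rw [hpt]
        exact hstep.symm
      have hclaim2 : ∀ n : ℕ, 𝒜 (σ.symm ω) 1 (uu (n+1) (σ.symm ω)) = uu n ω := by
        intro n
        have hpt : σ^[n+1] (σ.symm ω) = σ^[n] ω := by
          rw [Function.iterate_succ_apply, σ.apply_symm_apply]
        have hstep := Stmt10.B_step hcoc D (σ^[n] ω) n (g (σ^[n] ω))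
        have hpt2 : σ.symm^[n+1] (σ^[n] ω) = σ.symm ω := by
          rw [Stmt10.symm_iter_of_iter_ge σ (Nat.le_succ n)]
          have hn1 : n + 1 - n = 1 := by omega
          rw [hn1, Function.iterate_one]
        rw [hpt2] at hstep
        show 𝒜 (σ.symm ω) 1 (D.B (σ^[n+1] (σ.symm ω)) (n+1)
          (Stmt10.Qp D (σ^[n+1] (σ.symm ω)) (g (σ^[n+1] (σ.symm ω))))) = _
        rw [hpt]
        exact hstep
      have hA := ContinuousLinearMap.map_tsum (𝒜 (σ.symm ω) 1)
        (hsum_s (σ.symm ω) hG')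
      have hB := ContinuousLinearMap.map_tsum (𝒜 (σ.symm ω) 1)
        (hsum_u1 (σ.symm ω) hG')
      have hFσ : 𝒜 (σ.symm ω) 1 (F (σ.symm ω)) =
          (∑' n, s (n+1) ω) - (∑' n, uu n ω) := by
        have hFs : F (σ.symm ω) =
            (∑' n, s n (σ.symm ω)) - (∑' n, uu (n+1) (σ.symm ω)) := rfl
        rw [hFs, map_sub, hA, hB]
        congr 1
        · exact tsum_congr hclaim1
        · exact tsum_congr hclaim2
      have hs0 : (∑' n, s n ω) = s 0 ω + ∑' n, s (n+1) ω :=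
        Summable.tsum_eq_zero_add (hsum_s ω hG)
      have hu0 : (∑' n, uu n ω) = uu 0 ω + ∑' n, uu (n+1) ω :=
        Summable.tsum_eq_zero_add (hsum_u ω hG)
      have hs00 : s 0 ω = D.P ω (g ω) := by
        show 𝒜 (σ.symm^[0] ω) 0 (D.P (σ.symm^[0] ω) (g (σ.symm^[0] ω))) = _
        rw [Function.iterate_zero_apply, Stmt10.zero_apply' hcoc]
      have hu00 : uu 0 ω = Stmt10.Qp D ω (g ω) := by
        show D.B (σ^[0] ω) 0 (Stmt10.Qp D (σ^[0] ω) (g (σ^[0] ω))) = _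
        rw [Function.iterate_zero_apply]
        exact Stmt10.B_zero hcoc D ω (g ω)
      have hFe : F ω = (∑' n, s n ω) - (∑' n, uu (n+1) ω) := rfl
      rw [hFe, hFσ, hs0, hu0, hs00, hu00]
      conv_rhs => rw [← Stmt10.P_add_Qp D ω (g ω)]
      abel
    -- measurable version
    have hSP_meas : ∀ N : ℕ, AEMeasurable (fun ω => (∑ k ∈ Finset.range N, s k ω) -
        (∑ k ∈ Finset.range N, uu (k+1) ω)) μ := by
      intro N
      exact (Finset.aemeasurable_fun_sum (Finset.range N) fun k _ => (hs_meas k).aemeasurable).sub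
        (Finset.aemeasurable_fun_sum (Finset.range N) fun k _ => huu_meas (k+1))
    have hF_aemeas : AEMeasurable F μ := by
      refine aemeasurable_of_tendsto_metrizable_ae' hSP_meas ?_
      filter_upwards [hGood] with ω hG
      exact ((hsum_s ω hG).hasSum.tendsto_sum_nat).sub
        ((hsum_u1 ω hG).hasSum.tendsto_sum_nat)
    set f : Ω → X := hF_aemeas.mk F with hfdef
    have hfF : ∀ᵐ ω ∂μ, F ω = f ω := hF_aemeas.ae_eq_mk
    have hfFσ : ∀ᵐ ω ∂μ, F (σ.symm ω) = f (σ.symm ω) := Stmt10.ae_comp hσs hfF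
    have hFBnd : ∀ᵐ ω ∂μ, C ω * ‖f ω‖ ≤ M₂ := by
      filter_upwards [hGood, hfF] with ω hG hfω
      rw [← hfω]
      calc C ω * ‖F ω‖ ≤ C ω * (Kt ω * M₂) :=
          mul_le_mul_of_nonneg_left (htsum_norm ω hG) (inv_pos.mpr (hKtpos ω)).le
        _ = M₂ := by rw [← mul_assoc, hCKt, one_mul]
    refine ⟨f, ⟨⟨hF_aemeas.measurable_mk, M₂, hFBnd⟩, ?_⟩, ?_⟩
    · filter_upwards [hGood, hfF, hfFσ] with ω hG h1 h2
      rw [← h1, ← h2]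
      exact heqn ω hG
    · -- uniqueness
      rintro f' ⟨⟨hf'_meas, M₁, hf'Bnd⟩, hf'Eq⟩
      set h : Ω → X := fun ω => f' ω - F ω with hhdef
      set M₃ : ℝ := M₁ + M₂ with hM₃def
      have hFEq : ∀ᵐ ω ∂μ, F ω - 𝒜 (σ.symm ω) 1 (F (σ.symm ω)) = g ω := by
        filter_upwards [hGood] with ω hG; exact heqn ω hG
      have hhEq : ∀ᵐ ω ∂μ, h ω = 𝒜 (σ.symm ω) 1 (h (σ.symm ω)) := by
        filter_upwards [hf'Eq, hFEq] with ω h1 h2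
        have h1' : f' ω - 𝒜 (σ.symm ω) 1 (f' (σ.symm ω)) = g ω := h1
        have e1 : f' ω = g ω + 𝒜 (σ.symm ω) 1 (f' (σ.symm ω)) :=
          sub_eq_iff_eq_add.mp h1'
        have e2 : F ω = g ω + 𝒜 (σ.symm ω) 1 (F (σ.symm ω)) :=
          sub_eq_iff_eq_add.mp h2
        show f' ω - F ω = 𝒜 (σ.symm ω) 1 (f' (σ.symm ω) - F (σ.symm ω))
        rw [e1, e2, map_sub (𝒜 (σ.symm ω) 1) (f' (σ.symm ω)) (F (σ.symm ω))]
        abel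
      have hf'Bnd' : ∀ᵐ ω ∂μ, 1 * ‖f' ω‖ ≤ M₁ * Kt ω := by
        filter_upwards [hf'Bnd] with ω h1
        have h2 : C ω * ‖f' ω‖ * Kt ω ≤ M₁ * Kt ω :=
          mul_le_mul_of_nonneg_right h1 (hKtpos ω).le
        rwa [mul_comm (C ω) _, mul_assoc, hCKt, mul_one, ← one_mul ‖f' ω‖] at h2
      have hhBnd : ∀ᵐ ω ∂μ, ‖h ω‖ ≤ M₃ * Kt ω := by
        filter_upwards [hGood, hf'Bnd'] with ω hG h1
        rw [one_mul] at h1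
        have hFn : ‖F ω‖ ≤ M₂ * Kt ω := by
          have h3 := htsum_norm ω hG
          linarith [h3]
        calc ‖h ω‖ ≤ ‖f' ω‖ + ‖F ω‖ := norm_sub_le _ _
          _ ≤ M₁ * Kt ω + M₂ * Kt ω := add_le_add h1 hFn
          _ = M₃ * Kt ω := by rw [hM₃def]; ring
      set Q0 : Ω → Prop := fun ω =>
        (h ω = 𝒜 (σ.symm ω) 1 (h (σ.symm ω))) ∧ ‖h ω‖ ≤ M₃ * Kt ω ∧
        (∀ j : ℕ, ‖(𝒜 ω j).comp (D.P ω)‖ ≤ D.K ω * Real.exp (-D.lam * j)) ∧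
        (∀ j : ℕ, ‖(D.B ω j).comp (ContinuousLinearMap.id ℝ X - D.P ω)‖ ≤
          D.K ω * Real.exp (-D.lam * j)) ∧
        Stmt10.envE σ K1 ε ω ≠ ⊤ with hQ0def
      have hQ0ae : ∀ᵐ ω ∂μ, Q0 ω := by
        filter_upwards [hhEq, hhBnd, D.bound_s, D.bound_u, hEfin] with ω a b c d e
        exact ⟨a, b, c, d, e⟩
      have hGood2 : ∀ᵐ ω ∂μ,
          (∀ k : ℕ, Q0 (σ^[k] ω)) ∧ (∀ k : ℕ, Q0 (σ.symm^[k] ω)) := by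
        have h1 : ∀ᵐ ω ∂μ, ∀ k : ℕ, Q0 (σ^[k] ω) :=
          ae_all_iff.mpr fun k => Stmt10.ae_comp (hσ.iterate k) hQ0ae
        have h2 : ∀ᵐ ω ∂μ, ∀ k : ℕ, Q0 (σ.symm^[k] ω) :=
          ae_all_iff.mpr fun k => Stmt10.ae_comp (hσs.iterate k) hQ0ae
        filter_upwards [h1, h2] with ω a b
        exact ⟨a, b⟩
      have hzero : ∀ ω,
          ((∀ k : ℕ, Q0 (σ^[k] ω)) ∧ (∀ k : ℕ, Q0 (σ.symm^[k] ω))) → h ω = 0 := by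
        intro ω hG
        have hQ00 : Q0 ω := by
          have hh := hG.1 0
          rwa [Function.iterate_zero_apply] at hh
        have hfin : Stmt10.envE σ K1 ε ω ≠ ⊤ := hQ00.2.2.2.2
        have hM₃0 : 0 ≤ M₃ := by
          have h4 : (0:ℝ) * Kt ω ≤ M₃ * Kt ω := by
            rw [zero_mul]
            exact le_trans (norm_nonneg _) hQ00.2.1
          exact le_of_mul_le_mul_right h4 (hKtpos ω)
        have hback : ∀ n : ℕ, h ω = 𝒜 (σ.symm^[n] ω) n (h (σ.symm^[n] ω)) := by
          intro n
          induction n with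
          | zero => rw [Function.iterate_zero_apply, Stmt10.zero_apply' hcoc]
          | succ n ih =>
            have hQ := (hG.2 n).1
            have hpt : σ.symm (σ.symm^[n] ω) = σ.symm^[n+1] ω :=
              (Function.iterate_succ_apply' σ.symm n ω).symm
            rw [hpt] at hQ
            have hstep := Stmt10.step1' hcoc (σ.symm^[n+1] ω) n (h (σ.symm^[n+1] ω))
            have hpt2 : σ (σ.symm^[n+1] ω) = σ.symm^[n] ω := by
              rw [Function.iterate_succ_apply', σ.apply_symm_apply]
            rw [hpt2] at hstep
            rw [ih, hQ, ← hstep]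
        have hfwd : ∀ n : ℕ, h (σ^[n] ω) = 𝒜 ω n (h ω) := by
          intro n
          induction n with
          | zero => rw [Function.iterate_zero_apply, Stmt10.zero_apply' hcoc]
          | succ n ih =>
            have hQ := (hG.1 (n+1)).1
            have hpt : σ.symm (σ^[n+1] ω) = σ^[n] ω := by
              rw [Function.iterate_succ_apply', σ.symm_apply_apply]
            rw [hpt] at hQ
            rw [hQ, ih]
            exact (Stmt10.step1 hcoc ω n (h ω)).symm
        set r2 : ℝ := Real.exp (ε + ε - D.lam) with hr2def
        have hr2_0 : 0 < r2 := Real.exp_pos _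
        have hr2_1 : r2 < 1 := by
          rw [hr2def, Real.exp_lt_one_iff, hεdef]; linarith
        have hexp_r2 : ∀ n : ℕ, Real.exp (ε * n) * Real.exp (-D.lam * n) *
            Real.exp (ε * n) = r2 ^ n := by
          intro n
          rw [hr2def, ← Real.exp_nat_mul, ← Real.exp_add, ← Real.exp_add]
          congr 1; ring
        have hPbound : ∀ n : ℕ, ‖D.P ω (h ω)‖ ≤ M₃ * (Kt ω * Kt ω) * r2 ^ n := by
          intro n
          obtain ⟨_, hhn, hbs, _, _⟩ := hG.2 n
          have hKb : K1 (σ.symm^[n] ω) ≤ Kt ω * Real.exp (ε * n) :=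
            Stmt10.K_le_envK_b hK0 ω hfin n
          have hKtb : Kt (σ.symm^[n] ω) ≤ Real.exp (ε * n) * Kt ω :=
            Stmt10.envK_iter_b hK0 hεpos.le ω hfin n
          have hrw : D.P ω (h ω) = ((𝒜 (σ.symm^[n] ω) n).comp
              (D.P (σ.symm^[n] ω))) (h (σ.symm^[n] ω)) := by
            rw [hback n]
            have heqv := Stmt10.equivar_n hcoc D (σ.symm^[n] ω) n (h (σ.symm^[n] ω))
            rw [Stmt10.iter_symm_iter] at heqv
            exact heqv
          rw [hrw]
          calc ‖((𝒜 (σ.symm^[n] ω) n).comp (D.P (σ.symm^[n] ω))) (h (σ.symm^[n] ω))‖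
              ≤ ‖(𝒜 (σ.symm^[n] ω) n).comp (D.P (σ.symm^[n] ω))‖ *
                ‖h (σ.symm^[n] ω)‖ := ContinuousLinearMap.le_opNorm _ _
            _ ≤ (D.K (σ.symm^[n] ω) * Real.exp (-D.lam * n)) *
                (M₃ * Kt (σ.symm^[n] ω)) :=
                mul_le_mul (hbs n) hhn (norm_nonneg _)
                  (le_trans (norm_nonneg _) (hbs n))
            _ ≤ ((Kt ω * Real.exp (ε * n)) * Real.exp (-D.lam * n)) *
                (M₃ * (Real.exp (ε * n) * Kt ω)) := by
                apply mul_le_mul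
                · apply mul_le_mul_of_nonneg_right _ (Real.exp_pos _).le
                  exact le_trans (hKK1 _) hKb
                · exact mul_le_mul_of_nonneg_left hKtb hM₃0
                · exact mul_nonneg hM₃0 (hKtpos _).le
                · exact mul_nonneg (mul_nonneg (hKtpos ω).le (Real.exp_pos _).le)
                    (Real.exp_pos _).le
            _ = M₃ * (Kt ω * Kt ω) * r2 ^ n := by rw [← hexp_r2 n]; ring
        have hQbound : ∀ n : ℕ, ‖Stmt10.Qp D ω (h ω)‖ ≤
            M₃ * (Kt ω * Kt ω) * r2 ^ n := by
          intro n
          obtain ⟨_, hhn, _, hbu, _⟩ := hG.1 n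
          have hKb : K1 (σ^[n] ω) ≤ Kt ω * Real.exp (ε * n) :=
            Stmt10.K_le_envK_f hK0 ω hfin n
          have hKtb : Kt (σ^[n] ω) ≤ Real.exp (ε * n) * Kt ω :=
            Stmt10.envK_iter_f hK0 hεpos.le ω hfin n
          have hinvl := Stmt10.invl_apply D (σ^[n] ω) n (h ω)
          rw [Stmt10.symm_iter_iter] at hinvl
          have hrw : Stmt10.Qp D ω (h ω) = ((D.B (σ^[n] ω) n).comp
              (ContinuousLinearMap.id ℝ X - D.P (σ^[n] ω))) (h (σ^[n] ω)) := by
            calc Stmt10.Qp D ω (h ω)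
                = D.B (σ^[n] ω) n (𝒜 ω n (Stmt10.Qp D ω (h ω))) := hinvl.symm
              _ = D.B (σ^[n] ω) n (Stmt10.Qp D (σ^[n] ω) (𝒜 ω n (h ω))) := by
                  rw [Stmt10.equivar_n_Q hcoc D]
              _ = ((D.B (σ^[n] ω) n).comp
                  (ContinuousLinearMap.id ℝ X - D.P (σ^[n] ω))) (h (σ^[n] ω)) := by
                  rw [← hfwd n]; rfl
          rw [hrw]
          calc ‖((D.B (σ^[n] ω) n).comp
                (ContinuousLinearMap.id ℝ X - D.P (σ^[n] ω))) (h (σ^[n] ω))‖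
              ≤ ‖(D.B (σ^[n] ω) n).comp
                (ContinuousLinearMap.id ℝ X - D.P (σ^[n] ω))‖ * ‖h (σ^[n] ω)‖ :=
                ContinuousLinearMap.le_opNorm _ _
            _ ≤ (D.K (σ^[n] ω) * Real.exp (-D.lam * n)) * (M₃ * Kt (σ^[n] ω)) :=
                mul_le_mul (hbu n) hhn (norm_nonneg _)
                  (le_trans (norm_nonneg _) (hbu n))
            _ ≤ ((Kt ω * Real.exp (ε * n)) * Real.exp (-D.lam * n)) *
                (M₃ * (Real.exp (ε * n) * Kt ω)) := by
                apply mul_le_mul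
                · apply mul_le_mul_of_nonneg_right _ (Real.exp_pos _).le
                  exact le_trans (hKK1 _) hKb
                · exact mul_le_mul_of_nonneg_left hKtb hM₃0
                · exact mul_nonneg hM₃0 (hKtpos _).le
                · exact mul_nonneg (mul_nonneg (hKtpos ω).le (Real.exp_pos _).le)
                    (Real.exp_pos _).le
            _ = M₃ * (Kt ω * Kt ω) * r2 ^ n := by rw [← hexp_r2 n]; ring
        have hlim : Filter.Tendsto (fun n : ℕ => M₃ * (Kt ω * Kt ω) * r2 ^ n)
            Filter.atTop (nhds 0) := by
          have ht := tendsto_pow_atTop_nhds_zero_of_lt_one hr2_0.le hr2_1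
          simpa using ht.const_mul (M₃ * (Kt ω * Kt ω))
        have hPz : D.P ω (h ω) = 0 := by
          have hle : ‖D.P ω (h ω)‖ ≤ 0 := ge_of_tendsto' hlim hPbound
          exact norm_le_zero_iff.mp hle
        have hQz : Stmt10.Qp D ω (h ω) = 0 := by
          have hle : ‖Stmt10.Qp D ω (h ω)‖ ≤ 0 := ge_of_tendsto' hlim hQbound
          exact norm_le_zero_iff.mp hle
        have hsum := Stmt10.P_add_Qp D ω (h ω)
        rw [hPz, hQz, add_zero] at hsum
        exact hsum.symm
      have hf'F : ∀ᵐ ω ∂μ, f' ω = F ω := by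
        filter_upwards [hGood2] with ω hG
        have hz := hzero ω hG
        exact sub_eq_zero.mp hz
      filter_upwards [hf'F, hfF] with ω h1 h2
      rw [h1]; exact h2
end

section
/- Let 𝒜 be a linear cocycle admitting a tempered exponential dichotomy with constant K and rate λ > 0. Choose d > 0 with d·(1+e^{-λ})/(1−e^{-λ}) < 1 and set c(ω) := d/K(σω). For any cocycle generator B with ‖A(ω) − B(ω)‖ ≤ c(ω) ℙ-a.e., and any g ∈ L^∞_K(Ω,X), the map T on L^∞(Ω,X) defined by (Tf)(ω) = Σ_{n=0}^∞ 𝒜(σ^{-n}ω,n)Π^s(σ^{-n}ω)((B−A)(σ^{-(n+1)}ω)f(σ^{-(n+1)}ω) + g(σ^{-n}ω)) − Σ_{n=1}^∞ 𝒜(σ^n ω,−n)Π^u(σ^n ω)((B−A)(σ^{n-1}ω)f(σ^{n-1}ω) + g(σ^n ω)) is a well-defined contraction on L^∞(Ω,X) with Lipschitz constant d·(1+e^{-λ})/(1−e^{-λ}) < 1. -/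
open MeasureTheory Filter

private lemma term_bound' {X : Type*} [NormedAddCommGroup X] [NormedSpace ℝ X]
    (S Q Δ : X →L[ℝ] X) (x y : X) (Kv ρ dv Mf Mg : ℝ)
    (hK : 0 < Kv) (hρ : 0 ≤ ρ) (hd : 0 ≤ dv) (hMf : 0 ≤ Mf)
    (hS : ‖S.comp Q‖ ≤ Kv * ρ) (hΔ : ‖Δ‖ ≤ dv / Kv)
    (hx : ‖x‖ ≤ Mf) (hy : Kv * ‖y‖ ≤ Mg) :
    ‖S (Q (Δ x + y))‖ ≤ (dv * Mf + Mg) * ρ := by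
  have hKne : Kv ≠ 0 := hK.ne'
  have hΔx : ‖Δ x‖ ≤ dv / Kv * Mf :=
    (Δ.le_opNorm x).trans (mul_le_mul hΔ hx (norm_nonneg _) (div_nonneg hd hK.le))
  calc ‖S (Q (Δ x + y))‖ = ‖(S.comp Q) (Δ x + y)‖ := by
        simp [ContinuousLinearMap.comp_apply]
    _ ≤ ‖S.comp Q‖ * ‖Δ x + y‖ := (S.comp Q).le_opNorm _
    _ ≤ (Kv * ρ) * (dv / Kv * Mf + ‖y‖) :=
        mul_le_mul hS ((norm_add_le _ _).trans (by linarith)) (norm_nonneg _)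
          (mul_nonneg hK.le hρ)
    _ = ρ * (dv * Mf + Kv * ‖y‖) := by field_simp
    _ ≤ ρ * (dv * Mf + Mg) := mul_le_mul_of_nonneg_left (by linarith) hρ
    _ = (dv * Mf + Mg) * ρ := mul_comm _ _

private lemma ae_iterate' {Ω : Type*} [MeasurableSpace Ω] (μ : Measure Ω) (σ : Ω ≃ᵐ Ω)
    (hσ : MeasurePreserving σ μ μ) (p : Ω → Prop) (hp : ∀ᵐ ω ∂μ, p ω) :
    ∀ᵐ ω ∂μ, ∀ n : ℕ, p (σ.symm^[n] ω) ∧ p (σ^[n] ω) := by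
  rw [ae_all_iff]
  intro n
  have h1 : MeasurePreserving (⇑σ.symm) μ μ := MeasurePreserving.symm σ hσ
  exact (((h1.iterate n).quasiMeasurePreserving.tendsto_ae).eventually hp).and
    (((hσ.iterate n).quasiMeasurePreserving.tendsto_ae).eventually hp)

private lemma aux_series {Ω X : Type*} [MeasurableSpace Ω]
    [NormedAddCommGroup X] [NormedSpace ℝ X] [CompleteSpace X]
    [MeasurableSpace X] [BorelSpace X]
    (μ : Measure Ω) (σ : Ω ≃ᵐ Ω) (hσ : MeasurePreserving σ μ μ)
    (𝒜 : Ω → ℕ → X →L[ℝ] X) (D : Dichotomy μ σ 𝒜)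
    (d : ℝ) (hd0 : 0 < d)
    (Bgen : Ω → X →L[ℝ] X)
    (hB : ∀ᵐ ω ∂μ, ‖𝒜 ω 1 - Bgen ω‖ ≤ d / D.K (σ ω))
    (f g : Ω → X) (Mf Mg : ℝ) (hMf : 0 ≤ Mf) (hMg : 0 ≤ Mg)
    (hf : ∀ᵐ ω ∂μ, ‖f ω‖ ≤ Mf) (hg : ∀ᵐ ω ∂μ, D.K ω * ‖g ω‖ ≤ Mg) :
    ∀ᵐ ω ∂μ,
      Summable (fun n : ℕ => 𝒜 (σ.symm^[n] ω) n (D.P (σ.symm^[n] ω)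
          ((Bgen (σ.symm^[n + 1] ω) - 𝒜 (σ.symm^[n + 1] ω) 1) (f (σ.symm^[n + 1] ω)) +
            g (σ.symm^[n] ω)))) ∧
      Summable (fun n : ℕ => D.B (σ^[n + 1] ω) (n + 1)
          ((ContinuousLinearMap.id ℝ X - D.P (σ^[n + 1] ω))
            ((Bgen (σ^[n] ω) - 𝒜 (σ^[n] ω) 1) (f (σ^[n] ω)) + g (σ^[n + 1] ω)))) ∧
      ‖∑' n : ℕ, 𝒜 (σ.symm^[n] ω) n (D.P (σ.symm^[n] ω)
          ((Bgen (σ.symm^[n + 1] ω) - 𝒜 (σ.symm^[n + 1] ω) 1) (f (σ.symm^[n + 1] ω)) +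
            g (σ.symm^[n] ω)))‖ ≤
        (d * Mf + Mg) * (1 - Real.exp (-D.lam))⁻¹ ∧
      ‖∑' n : ℕ, D.B (σ^[n + 1] ω) (n + 1)
          ((ContinuousLinearMap.id ℝ X - D.P (σ^[n + 1] ω))
            ((Bgen (σ^[n] ω) - 𝒜 (σ^[n] ω) 1) (f (σ^[n] ω)) + g (σ^[n + 1] ω)))‖ ≤
        (d * Mf + Mg) * Real.exp (-D.lam) * (1 - Real.exp (-D.lam))⁻¹ := by
  set r : ℝ := Real.exp (-D.lam) with hrdef
  have hr0 : 0 ≤ r := (Real.exp_pos _).le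
  have hr1 : r < 1 := Real.exp_lt_one_iff.mpr (by simpa using D.lam_pos)
  have hrr : 0 < 1 - r := by linarith
  set p : Ω → Prop := fun ω =>
    (∀ m : ℕ, ‖(𝒜 ω m).comp (D.P ω)‖ ≤ D.K ω * r ^ m) ∧
    (∀ m : ℕ, ‖(D.B ω m).comp (ContinuousLinearMap.id ℝ X - D.P ω)‖ ≤ D.K ω * r ^ m) ∧
    ‖𝒜 ω 1 - Bgen ω‖ ≤ d / D.K (σ ω) ∧
    D.K ω * ‖g ω‖ ≤ Mg ∧
    ‖f ω‖ ≤ Mf with hpdef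
  have hp : ∀ᵐ ω ∂μ, p ω := by
    filter_upwards [D.bound_s, D.bound_u, hB, hg, hf] with ω h1 h2 h3 h4 h5
    refine ⟨fun m => ?_, fun m => ?_, h3, h4, h5⟩
    · have := h1 m
      rwa [show (-D.lam * (m : ℝ)) = (m : ℝ) * (-D.lam) by ring, Real.exp_nat_mul] at this
    · have := h2 m
      rwa [show (-D.lam * (m : ℝ)) = (m : ℝ) * (-D.lam) by ring, Real.exp_nat_mul] at this
  filter_upwards [ae_iterate' μ σ hσ p hp] with ω hω
  have hcomp1 : ∀ n : ℕ, σ (σ.symm^[n + 1] ω) = σ.symm^[n] ω := by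
    intro n
    rw [Function.iterate_succ_apply']
    exact σ.apply_symm_apply _
  have hcomp2 : ∀ n : ℕ, σ (σ^[n] ω) = σ^[n + 1] ω := fun n =>
    (Function.iterate_succ_apply' (⇑σ) n ω).symm
  have ha : ∀ n : ℕ, ‖𝒜 (σ.symm^[n] ω) n (D.P (σ.symm^[n] ω)
      ((Bgen (σ.symm^[n + 1] ω) - 𝒜 (σ.symm^[n + 1] ω) 1) (f (σ.symm^[n + 1] ω)) +
        g (σ.symm^[n] ω)))‖ ≤ (d * Mf + Mg) * r ^ n := by
    intro n
    have hb2 := (hω (n + 1)).1.2.2.1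
    rw [hcomp1 n] at hb2
    exact term_bound' (𝒜 (σ.symm^[n] ω) n) (D.P (σ.symm^[n] ω))
      (Bgen (σ.symm^[n + 1] ω) - 𝒜 (σ.symm^[n + 1] ω) 1)
      (f (σ.symm^[n + 1] ω)) (g (σ.symm^[n] ω))
      (D.K (σ.symm^[n] ω)) (r ^ n) d Mf Mg (D.K_pos _) (pow_nonneg hr0 n) hd0.le hMf
      ((hω n).1.1 n) (by rw [norm_sub_rev]; exact hb2)
      ((hω (n + 1)).1.2.2.2.2) ((hω n).1.2.2.2.1)
  have hb : ∀ n : ℕ, ‖D.B (σ^[n + 1] ω) (n + 1)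
      ((ContinuousLinearMap.id ℝ X - D.P (σ^[n + 1] ω))
        ((Bgen (σ^[n] ω) - 𝒜 (σ^[n] ω) 1) (f (σ^[n] ω)) + g (σ^[n + 1] ω)))‖ ≤
      ((d * Mf + Mg) * r) * r ^ n := by
    intro n
    have hb2 := (hω n).2.2.2.1
    rw [hcomp2 n] at hb2
    have := term_bound' (D.B (σ^[n + 1] ω) (n + 1))
      (ContinuousLinearMap.id ℝ X - D.P (σ^[n + 1] ω))
      (Bgen (σ^[n] ω) - 𝒜 (σ^[n] ω) 1) (f (σ^[n] ω)) (g (σ^[n + 1] ω))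
      (D.K (σ^[n + 1] ω)) (r ^ (n + 1)) d Mf Mg (D.K_pos _) (pow_nonneg hr0 _) hd0.le hMf
      ((hω (n + 1)).2.2.1 (n + 1)) (by rw [norm_sub_rev]; exact hb2)
      ((hω n).2.2.2.2.2) ((hω (n + 1)).2.2.2.2.1)
    exact this.trans_eq (by ring)
  exact ⟨Summable.of_norm_bounded ((summable_geometric_of_lt_one hr0 hr1).mul_left _) ha,
    Summable.of_norm_bounded ((summable_geometric_of_lt_one hr0 hr1).mul_left _) hb,
    tsum_of_norm_bounded ((hasSum_geometric_of_lt_one hr0 hr1).mul_left _) ha,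
    (tsum_of_norm_bounded ((hasSum_geometric_of_lt_one hr0 hr1).mul_left _) hb).trans_eq
      (by ring)⟩

/-- Under a tempered exponential dichotomy and for a perturbed
generator `B` with `‖A(ω) − B(ω)‖ ≤ d / K(σω)` a.e. (where
`d (1+e^{-λ})/(1−e^{-λ}) < 1`), the operator `T` defined by the dichotomy series is a
well-defined contraction on `L^∞(Ω,X)` with Lipschitz constant
`d (1+e^{-λ})/(1−e^{-λ}) < 1`. -/
theorem stmt_16 {Ω X : Type*} [MeasurableSpace Ω]
    [NormedAddCommGroup X] [NormedSpace ℝ X] [CompleteSpace X]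
    [MeasurableSpace X] [BorelSpace X]
    (μ : Measure Ω) [IsProbabilityMeasure μ] (σ : Ω ≃ᵐ Ω)
    (hσ : MeasurePreserving σ μ μ) (herg : Ergodic (⇑σ) μ)
    (𝒜 : Ω → ℕ → X →L[ℝ] X) (hcoc : IsCocycle (⇑σ) 𝒜)
    (D : Dichotomy μ σ 𝒜)
    (d : ℝ) (hd0 : 0 < d)
    (hd : d * ((1 + Real.exp (-D.lam)) / (1 - Real.exp (-D.lam))) < 1)
    (Bgen : Ω → X →L[ℝ] X)
    (hB : ∀ᵐ ω ∂μ, ‖𝒜 ω 1 - Bgen ω‖ ≤ d / D.K (σ ω))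
    (g : Ω → X) (hgmeas : Measurable g) (Mg : ℝ)
    (hg : ∀ᵐ ω ∂μ, D.K ω * ‖g ω‖ ≤ Mg)
    (T : (Ω → X) → Ω → X)
    (hT : ∀ f ω, T f ω =
      (∑' n : ℕ, 𝒜 (σ.symm^[n] ω) n (D.P (σ.symm^[n] ω)
          ((Bgen (σ.symm^[n + 1] ω) - 𝒜 (σ.symm^[n + 1] ω) 1) (f (σ.symm^[n + 1] ω)) +
            g (σ.symm^[n] ω)))) -
        ∑' n : ℕ, D.B (σ^[n + 1] ω) (n + 1)
          ((ContinuousLinearMap.id ℝ X - D.P (σ^[n + 1] ω))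
            ((Bgen (σ^[n] ω) - 𝒜 (σ^[n] ω) 1) (f (σ^[n] ω)) + g (σ^[n + 1] ω)))) :
    (∀ f : Ω → X, ∀ Mf : ℝ, (∀ᵐ ω ∂μ, ‖f ω‖ ≤ Mf) →
        ∀ᵐ ω ∂μ, ‖T f ω‖ ≤
          ((1 + Real.exp (-D.lam)) / (1 - Real.exp (-D.lam))) * (d * Mf + Mg)) ∧
      ∀ f₁ f₂ : Ω → X, ∀ M12 : ℝ, (∀ᵐ ω ∂μ, ‖f₁ ω - f₂ ω‖ ≤ M12) →
        ∀ᵐ ω ∂μ, ‖T f₁ ω - T f₂ ω‖ ≤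
          d * ((1 + Real.exp (-D.lam)) / (1 - Real.exp (-D.lam))) * M12 := by
  set r : ℝ := Real.exp (-D.lam) with hrdef
  have hr0 : 0 ≤ r := (Real.exp_pos _).le
  have hr1 : r < 1 := Real.exp_lt_one_iff.mpr (by simpa using D.lam_pos)
  have hrr : 0 < 1 - r := by linarith
  have hMg : 0 ≤ Mg := by
    obtain ⟨ω₀, hω₀⟩ := hg.exists
    exact le_trans (mul_nonneg (D.K_pos _).le (norm_nonneg _)) hω₀
  constructor
  · intro f Mf hf
    have hMf : 0 ≤ Mf := by
      obtain ⟨ω₀, hω₀⟩ := hf.exists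
      exact le_trans (norm_nonneg _) hω₀
    filter_upwards [aux_series μ σ hσ 𝒜 D d hd0 Bgen hB f g Mf Mg hMf hMg hf hg] with ω h
    rw [hT]
    calc ‖_ - _‖ ≤ _ := norm_sub_le _ _
      _ ≤ (d * Mf + Mg) * (1 - r)⁻¹ + (d * Mf + Mg) * r * (1 - r)⁻¹ :=
          add_le_add h.2.2.1 h.2.2.2
      _ = (1 + r) / (1 - r) * (d * Mf + Mg) := by field_simp
  · intro f₁ f₂ M12 hf12
    have hM12 : 0 ≤ M12 := by
      obtain ⟨ω₀, hω₀⟩ := hf12.exists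
      exact le_trans (norm_nonneg _) hω₀
    have hg0 : ∀ᵐ ω ∂μ, D.K ω * ‖(0 : Ω → X) ω‖ ≤ (0 : ℝ) :=
      Filter.Eventually.of_forall fun ω => by simp
    have key12 := aux_series μ σ hσ 𝒜 D d hd0 Bgen hB (f₁ - f₂) 0 M12 0 hM12 le_rfl
      (by filter_upwards [hf12] with ω h; simpa using h) hg0
    filter_upwards [key12] with ω h12
    rw [hT, hT]
    set A₁ : ℕ → X := fun n => 𝒜 (σ.symm^[n] ω) n (D.P (σ.symm^[n] ω)
        ((Bgen (σ.symm^[n + 1] ω) - 𝒜 (σ.symm^[n + 1] ω) 1) (f₁ (σ.symm^[n + 1] ω)) +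
          g (σ.symm^[n] ω))) with hA₁
    set A₂ : ℕ → X := fun n => 𝒜 (σ.symm^[n] ω) n (D.P (σ.symm^[n] ω)
        ((Bgen (σ.symm^[n + 1] ω) - 𝒜 (σ.symm^[n + 1] ω) 1) (f₂ (σ.symm^[n + 1] ω)) +
          g (σ.symm^[n] ω))) with hA₂
    set A₀ : ℕ → X := fun n => 𝒜 (σ.symm^[n] ω) n (D.P (σ.symm^[n] ω)
        ((Bgen (σ.symm^[n + 1] ω) - 𝒜 (σ.symm^[n + 1] ω) 1) ((f₁ - f₂) (σ.symm^[n + 1] ω)) +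
          (0 : Ω → X) (σ.symm^[n] ω))) with hA₀
    set B₁ : ℕ → X := fun n => D.B (σ^[n + 1] ω) (n + 1)
        ((ContinuousLinearMap.id ℝ X - D.P (σ^[n + 1] ω))
          ((Bgen (σ^[n] ω) - 𝒜 (σ^[n] ω) 1) (f₁ (σ^[n] ω)) + g (σ^[n + 1] ω))) with hB₁
    set B₂ : ℕ → X := fun n => D.B (σ^[n + 1] ω) (n + 1)
        ((ContinuousLinearMap.id ℝ X - D.P (σ^[n + 1] ω))
          ((Bgen (σ^[n] ω) - 𝒜 (σ^[n] ω) 1) (f₂ (σ^[n] ω)) + g (σ^[n + 1] ω))) with hB₂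
    set B₀ : ℕ → X := fun n => D.B (σ^[n + 1] ω) (n + 1)
        ((ContinuousLinearMap.id ℝ X - D.P (σ^[n + 1] ω))
          ((Bgen (σ^[n] ω) - 𝒜 (σ^[n] ω) 1) ((f₁ - f₂) (σ^[n] ω)) +
            (0 : Ω → X) (σ^[n + 1] ω))) with hB₀
    have hAeq : ∀ n : ℕ, A₁ n - A₂ n = A₀ n := by
      intro n
      simp only [hA₁, hA₂, hA₀, Pi.sub_apply, Pi.zero_apply, add_zero, ← map_sub,
        add_sub_add_right_eq_sub]
    have hBeq : ∀ n : ℕ, B₁ n - B₂ n = B₀ n := by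
      intro n
      simp only [hB₁, hB₂, hB₀, Pi.sub_apply, Pi.zero_apply, add_zero, ← map_sub,
        add_sub_add_right_eq_sub]
    have hsA₀ : Summable A₀ := h12.1
    have hsB₀ : Summable B₀ := h12.2.1
    have hC0 : 0 ≤ (d * M12 + 0) * (1 - r)⁻¹ := by positivity
    have hCr0 : 0 ≤ (d * M12 + 0) * r * (1 - r)⁻¹ := by positivity
    have hAbound : ‖(∑' n, A₁ n) - ∑' n, A₂ n‖ ≤ (d * M12 + 0) * (1 - r)⁻¹ := by
      by_cases hA : Summable A₁
      · have hsub : Summable (fun n => A₁ n - A₂ n) := hsA₀.congr fun n => (hAeq n).symm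
        have hA2 : Summable A₂ := by
          have := hA.sub hsub
          exact this.congr fun n => by simp
        rw [← Summable.tsum_sub hA hA2, tsum_congr hAeq]
        exact h12.2.2.1
      · have hA2 : ¬ Summable A₂ := by
          intro hA2
          exact hA ((hA2.add (hsA₀.congr fun n => (hAeq n).symm)).congr fun n => by abel)
        rw [tsum_eq_zero_of_not_summable hA, tsum_eq_zero_of_not_summable hA2]
        simpa using hC0
    have hBbound : ‖(∑' n, B₁ n) - ∑' n, B₂ n‖ ≤ (d * M12 + 0) * r * (1 - r)⁻¹ := by
      by_cases hBs : Summable B₁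
      · have hsub : Summable (fun n => B₁ n - B₂ n) := hsB₀.congr fun n => (hBeq n).symm
        have hB2 : Summable B₂ := by
          have := hBs.sub hsub
          exact this.congr fun n => by simp
        rw [← Summable.tsum_sub hBs hB2, tsum_congr hBeq]
        exact h12.2.2.2
      · have hB2 : ¬ Summable B₂ := by
          intro hB2
          exact hBs ((hB2.add (hsB₀.congr fun n => (hBeq n).symm)).congr fun n => by abel)
        rw [tsum_eq_zero_of_not_summable hBs, tsum_eq_zero_of_not_summable hB2]
        simpa using hCr0
    calc ‖((∑' n, A₁ n) - ∑' n, B₁ n) - ((∑' n, A₂ n) - ∑' n, B₂ n)‖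
        = ‖((∑' n, A₁ n) - ∑' n, A₂ n) - ((∑' n, B₁ n) - ∑' n, B₂ n)‖ := by
          congr 1; abel
      _ ≤ ‖(∑' n, A₁ n) - ∑' n, A₂ n‖ + ‖(∑' n, B₁ n) - ∑' n, B₂ n‖ := norm_sub_le _ _
      _ ≤ (d * M12 + 0) * (1 - r)⁻¹ + (d * M12 + 0) * r * (1 - r)⁻¹ :=
          add_le_add hAbound hBbound
      _ = d * ((1 + r) / (1 - r)) * M12 := by field_simp; ring
end
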